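/- arXiv:0801.1627 — 5 statements merged into one kernel-verified Lean document; each statement's English description precedes it below -/
import Mathlib

section
/- Fix integers l ≥ 1, n ≥ 0, d ≥ 1, a tuple c = (c_0,…,c_{l−1}) of nonnegative integers with c_0+…+c_{l−1} = d, a tuple r = (r_0,…,r_{l−1}) of integers with r_0+…+r_{l−1} = 0, and a permutation w of {0,…,l−1}. For 0 ≤ p ≤ l−1 set m_p = c_0+…+c_p and s_p = d·r_p − d·r_{l−1} + m_p, and for 0 ≤ t ≤ d set I_t = {p ∈ {0,…,l−1} : m_p = t}. For an l-multipartition λ = (λ^{(0)},…,λ^{(l−1)}) of n let C(λ)^p = β^{r_p}(λ^{(w^{−1}(p))}). Then for any two l-multipartitions λ, μ of n the following are equivalent: (1) C(λ)_{[t]} = C(μ)_{[t]} as multisets for every 0 ≤ t ≤ d (i.e. λ and μ have the same J-heart); (2) Σ_{p=0}^{l−1} x^{s_p}·Res_{λ^{(w^{−1}(p))}}(x^d) = Σ_{p=0}^{l−1} x^{s_p}·Res_{μ^{(w^{−1}(p))}}(x^d) in ℤ[x, x^{−1}], where Res_ν(x^d) denotes the image of Res_ν(x) under the substitution x ↦ x^d.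 -/
/-- A partition: a weakly decreasing, eventually-zero sequence of naturals.
`part i` is the `(i+1)`-st part `λ_{i+1}`. -/
structure PartitionSeq where
  part : ℕ → ℕ
  antitone : Antitone part
  eventually_zero : ∃ N, ∀ i ≥ N, part i = 0

/-- The length `L(λ)`: the number of nonzero parts. -/
noncomputable def PartitionSeq.length (lam : PartitionSeq) : ℕ :=
  Set.ncard {i : ℕ | lam.part i ≠ 0}

/-- The size `|λ|`: the sum of the parts. -/
noncomputable def PartitionSeq.size (lam : PartitionSeq) : ℕ :=
  ∑ i ∈ Finset.range lam.length, lam.part i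

/-- `beta lam r i` is the `(i+1)`-st entry `β^r(λ)_{i+1} = λ_{i+1} + r - i` of the
`r`-shifted β-number (0-indexed version of `β^r(λ)_i = λ_i + r + 1 - i`). -/
def PartitionSeq.beta (lam : PartitionSeq) (r : ℤ) (i : ℕ) : ℤ :=
  (lam.part i : ℤ) + r - (i : ℤ)

/-- The residue `Res_λ(x) = Σ_{(a,b) ∈ Y(λ)} x^{cont(a,b)}` as a Laurent polynomial. -/
noncomputable def PartitionSeq.residue (lam : PartitionSeq) : LaurentPolynomial ℤ :=
  ∑ a ∈ Finset.range lam.length, ∑ b ∈ Finset.range (lam.part a),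
    LaurentPolynomial.T ((b : ℤ) - (a : ℤ))

/-- The residue with `x ↦ x^d` substituted: `Res_λ(x^d)`. -/
noncomputable def PartitionSeq.residuePow (lam : PartitionSeq) (d : ℕ) : LaurentPolynomial ℤ :=
  ∑ a ∈ Finset.range lam.length, ∑ b ∈ Finset.range (lam.part a),
    LaurentPolynomial.T ((d : ℤ) * ((b : ℤ) - (a : ℤ)))

/-- A strictly decreasing integer sequence `C` stabilises with respect to `r` if
`C_i = r + 1 - i` for all large `i` (0-indexed: `C i = r - i`). -/
def Stabilises (C : ℕ → ℤ) (r : ℤ) : Prop :=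
  ∃ K : ℕ, ∀ i ≥ K, C i = r - (i : ℤ)

/-- The partial sum `m_p(c) = c_0 + ⋯ + c_p`. -/
def psum {l : ℕ} (c : Fin l → ℕ) (p : Fin l) : ℕ := ∑ j ∈ Finset.Iic p, c j

/-- The multiplicity at `z ∈ ℤ` of the multiset `C_{[t]}`, for `0 ≤ t ≤ d`,
where `I_t = {p : m_p(c) = t}`; for `t = 0` or `t = d` this is the common multiset
`C_{[0]} = C_{[d]}` built from `I_0` (with entries shifted by `-1`) and `I_d`. -/
noncomputable def multAt {l : ℕ} (d : ℕ) (c : Fin l → ℕ) (C : Fin l → ℕ → ℤ)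
    (t : ℕ) (z : ℤ) : ℕ :=
  if t = 0 ∨ t = d then
    Nat.card {pi : Fin l × ℕ // psum c pi.1 = 0 ∧ C pi.1 pi.2 - 1 = z} +
    Nat.card {pi : Fin l × ℕ // psum c pi.1 = d ∧ C pi.1 pi.2 = z}
  else
    Nat.card {pi : Fin l × ℕ // psum c pi.1 = t ∧ C pi.1 pi.2 = z}

/-- The set `χ(C) = {l(C^q_i − 1) + q + 1 : 0 ≤ q ≤ l−1, i ≥ 1} ⊆ ℤ`. -/
def chiSet (l : ℕ) (C : Fin l → ℕ → ℤ) : Set ℤ :=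
  {z : ℤ | ∃ (q : Fin l) (i : ℕ), z = (l : ℤ) * (C q i - 1) + (q : ℤ) + 1}

/-- `Ct` is an admissible tuple for `C` (with respect to the data `d`, `c`):
(i) each `Ct p` is strictly decreasing; (ii) the multisets `Ct_{[t]}` and `C_{[t]}`
agree for all `0 ≤ t ≤ d`; (iii) for `0 ≠ p ∈ J = {j : c_j = 0}`, every term of `Ct p`
is a term of `Ct (p-1)`; (iv) if `0 ∈ J`, then for every term `z` of `Ct 0`,
`z - 1` is a term of `Ct (l-1)`. -/
def IsAdmissible {l : ℕ} (d : ℕ) (c : Fin l → ℕ) (C Ct : Fin l → ℕ → ℤ) : Prop :=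
  (∀ p : Fin l, StrictAnti (Ct p)) ∧
  (∀ t ≤ d, ∀ z : ℤ, multAt d c Ct t z = multAt d c C t z) ∧
  (∀ p : Fin l, c p = 0 → (p : ℕ) ≠ 0 →
    ∀ i : ℕ, ∃ i' : ℕ,
      Ct ⟨(p : ℕ) - 1, lt_of_le_of_lt (Nat.sub_le _ _) p.isLt⟩ i' = Ct p i) ∧
  (∀ h0 : 0 < l, c ⟨0, h0⟩ = 0 →
    ∀ i : ℕ, ∃ i' : ℕ, Ct ⟨l - 1, Nat.sub_lt h0 Nat.one_pos⟩ i' = Ct ⟨0, h0⟩ i - 1)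

/-- The Young diagram of a partition, with 0-indexed nodes:
`(a,b)` is a node iff `b < λ_{a+1}`. -/
def YoungSet (lam : PartitionSeq) : Set (ℕ × ℕ) :=
  {ab : ℕ × ℕ | ab.2 < lam.part ab.1}

/-- `S` is the Young diagram of the partition `mu`. -/
def IsDiagramOf (S : Set (ℕ × ℕ)) (mu : PartitionSeq) : Prop :=
  S = YoungSet mu

/-- The node `ab` of `Y(λ)` is removable: deleting it leaves the Young diagram
of some partition. -/
def IsRemovableNode (lam : PartitionSeq) (ab : ℕ × ℕ) : Prop :=
  ab ∈ YoungSet lam ∧ ∃ mu : PartitionSeq, IsDiagramOf (YoungSet lam \ {ab}) mu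

/-- The node `ab` of `Y(λ)` is `j`-removable (mod `l`): it is removable and its
content is congruent to `j` mod `l`. -/
def IsJRemovable (l j : ℕ) (lam : PartitionSeq) (ab : ℕ × ℕ) : Prop :=
  IsRemovableNode lam ab ∧ ((ab.2 : ℤ) - (ab.1 : ℤ)) ≡ (j : ℤ) [ZMOD (l : ℤ)]

/-- The node `ab` is `J`-removable for a set `J` of residues: `j`-removable
for some `j ∈ J`. -/
def IsSetRemovable (l : ℕ) (J : Set ℕ) (lam : PartitionSeq) (ab : ℕ × ℕ) : Prop :=
  ∃ j ∈ J, IsJRemovable l j lam ab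

/-- `mu` is obtained from `lam` by deleting a single `J`-removable node. -/
def RemoveStep (l : ℕ) (J : Set ℕ) (lam mu : PartitionSeq) : Prop :=
  ∃ ab : ℕ × ℕ, IsSetRemovable l J lam ab ∧ IsDiagramOf (YoungSet lam \ {ab}) mu

/-- The partial sum `m_p(θ) = θ_0 + ⋯ + θ_p` of a rational vector. -/
def psumQ {l : ℕ} (θ : Fin l → ℚ) (p : Fin l) : ℚ := ∑ j ∈ Finset.Iic p, θ j

/-- The map `s_i : ℚ^l → ℚ^l` (for `1 ≤ i ≤ l-1`). -/
def sAct {l : ℕ} (i : Fin l) (θ : Fin l → ℚ) : Fin l → ℚ := fun p =>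
  if (p : ℕ) = (i : ℕ) - 1 then θ p + θ i
  else if p = i then -θ i
  else if (p : ℕ) = (i : ℕ) + 1 then θ i + θ p
  else θ p

open LaurentPolynomial Finset

noncomputable instance : NoZeroDivisors (LaurentPolynomial ℤ) := by
  unfold LaurentPolynomial; infer_instance

lemma T_ne_zero' (n : ℤ) : (T n : LaurentPolynomial ℤ) ≠ 0 := by
  intro h
  have h2 : (T n : LaurentPolynomial ℤ).coeff n = 0 := by simp [h]
  rw [T_apply, if_pos rfl] at h2
  exact one_ne_zero h2

lemma Td_sub_one_ne_zero {d : ℕ} (hd : 1 ≤ d) : (T (d:ℤ) - 1 : LaurentPolynomial ℤ) ≠ 0 := by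
  intro h
  have h2 : (T (d:ℤ) - 1 : LaurentPolynomial ℤ).coeff (d:ℤ) = 0 := by simp [h]
  rw [AddMonoidAlgebra.coeff_sub, Finsupp.sub_apply, ← T_zero, T_apply, T_apply] at h2
  rw [if_pos rfl, if_neg (show ¬((0:ℤ) = (d:ℤ)) by omega)] at h2
  norm_num at h2

lemma coeff_sum_T {α : Type*} [DecidableEq α] (s : Finset α) (f : α → ℤ) (e : ℤ) :
    (∑ x ∈ s, T (f x) : LaurentPolynomial ℤ).coeff e = ((s.filter (fun x => f x = e)).card : ℤ) := by
  rw [AddMonoidAlgebra.coeff_sum, Finsupp.finset_sum_apply, Finset.card_filter]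
  push_cast
  exact Finset.sum_congr rfl fun x _ => by rw [T_apply]

lemma PartitionSeq.part_eq_zero_of_length_le (lam : PartitionSeq) {a : ℕ}
    (h : lam.length ≤ a) : lam.part a = 0 := by
  by_contra hne
  obtain ⟨N0, hN0⟩ := lam.eventually_zero
  have hfin : {i : ℕ | lam.part i ≠ 0}.Finite := by
    apply Set.Finite.subset (Set.finite_Iio N0)
    intro i hi
    by_contra hlt
    exact hi (hN0 i (by simpa [Set.mem_Iio] using hlt))
  have hsub : Set.Iic a ⊆ {i : ℕ | lam.part i ≠ 0} := by
    intro j hj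
    have h2 : lam.part a ≤ lam.part j := lam.antitone hj
    simp only [Set.mem_setOf_eq]
    omega
  have h1 : (Set.Iic a).ncard ≤ lam.length := Set.ncard_le_ncard hsub hfin
  have h2 : (Set.Iic a).ncard = a + 1 := by
    rw [← Finset.coe_Iic, Set.ncard_coe_finset, Nat.card_Iic]
  omega

lemma telescope (d : ℕ) (a : ℤ) (m : ℕ) :
    (T (d:ℤ) - 1) * ∑ b ∈ Finset.range m, (T ((d:ℤ) * ((b:ℤ) - a)) : LaurentPolynomial ℤ)
      = T ((d:ℤ) * ((m:ℤ) - a)) - T ((d:ℤ) * (-a)) := by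
  induction m with
  | zero => simp
  | succ m ih =>
    rw [Finset.sum_range_succ, mul_add, ih, sub_mul, one_mul, ← T_add]
    have h : (d:ℤ) + (d:ℤ) * ((m:ℤ) - a) = (d:ℤ) * (((m:ℕ)+1:ℤ) - a) := by push_cast; ring
    rw [h]
    push_cast
    ring

lemma key_identity (lam : PartitionSeq) (d : ℕ) (s : ℤ) (N : ℕ) (hN : lam.length ≤ N) :
    (T (d:ℤ) - 1) * (T s * lam.residuePow d)
      = ∑ a ∈ Finset.range N,
          (T (s + (d:ℤ) * ((lam.part a : ℤ) - (a:ℤ))) - T (s - (d:ℤ) * (a:ℤ))) := by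
  have step : ∀ a : ℕ,
      (T (d:ℤ) - 1) * (T s * ∑ b ∈ Finset.range (lam.part a),
          (T ((d:ℤ) * ((b:ℤ) - (a:ℤ))) : LaurentPolynomial ℤ))
        = T (s + (d:ℤ) * ((lam.part a : ℤ) - (a:ℤ))) - T (s - (d:ℤ) * (a:ℤ)) := by
    intro a
    rw [mul_left_comm, telescope, mul_sub, ← T_add, ← T_add]
    congr 2
    ring
  calc (T (d:ℤ) - 1) * (T s * lam.residuePow d)
      = ∑ a ∈ Finset.range lam.length,
          (T (s + (d:ℤ) * ((lam.part a : ℤ) - (a:ℤ))) - T (s - (d:ℤ) * (a:ℤ))) := by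
        rw [PartitionSeq.residuePow, Finset.mul_sum, Finset.mul_sum]
        exact Finset.sum_congr rfl fun a _ => step a
    _ = _ := by
        apply Finset.sum_subset (Finset.range_subset_range.mpr hN)
        intro a _ ha
        have hz : lam.part a = 0 :=
          lam.part_eq_zero_of_length_le (by simp only [Finset.mem_range] at ha; omega)
        rw [hz]
        rw [show s + (d:ℤ) * (((0:ℕ):ℤ) - (a:ℤ)) = s - (d:ℤ) * (a:ℤ) by push_cast; ring,
          sub_self]

lemma natCard_split {l : ℕ} (P : Fin l → Prop) [DecidablePred P] (C : Fin l → ℕ → ℤ)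
    (r : Fin l → ℤ) (N : ℕ) (hstab : ∀ p i, N ≤ i → C p i = r p - (i:ℤ)) (z : ℤ) :
    Nat.card {pi : Fin l × ℕ // P pi.1 ∧ C pi.1 pi.2 = z}
      = ((Finset.univ ×ˢ Finset.range N).filter
           (fun pa : Fin l × ℕ => P pa.1 ∧ C pa.1 pa.2 = z)).card
        + (Finset.univ.filter (fun p : Fin l => P p ∧ z + (N:ℤ) ≤ r p)).card := by
  classical
  set F1 := (Finset.univ ×ˢ Finset.range N).filter
    (fun pa : Fin l × ℕ => P pa.1 ∧ C pa.1 pa.2 = z) with hF1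
  set F2 := (Finset.univ.filter (fun p : Fin l => P p ∧ z + (N:ℤ) ≤ r p)).image
    (fun p => (p, (r p - z).toNat)) with hF2
  have hinj : Function.Injective (fun p : Fin l => (p, (r p - z).toNat)) :=
    fun a b h => congrArg Prod.fst h
  have hmem2 : ∀ pa : Fin l × ℕ,
      pa ∈ F2 ↔ P pa.1 ∧ z + (N:ℤ) ≤ r pa.1 ∧ pa.2 = (r pa.1 - z).toNat := by
    rintro ⟨p, i⟩
    simp only [hF2, Finset.mem_image, Finset.mem_filter, Finset.mem_univ, true_and]
    constructor
    · rintro ⟨q, ⟨hq1, hq2⟩, heq⟩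
      cases heq
      exact ⟨hq1, hq2, rfl⟩
    · rintro ⟨h1, h2, h3⟩
      exact ⟨p, ⟨h1, h2⟩, by rw [h3]⟩
  have hset : {pa : Fin l × ℕ | P pa.1 ∧ C pa.1 pa.2 = z} = ↑(F1 ∪ F2) := by
    ext ⟨p, i⟩
    simp only [Set.mem_setOf_eq, Finset.coe_union, Set.mem_union, Finset.mem_coe]
    rw [hmem2 (p, i)]
    simp only [hF1, Finset.mem_filter, Finset.mem_product, Finset.mem_univ, Finset.mem_range,
      true_and]
    constructor
    · rintro ⟨hP, hC⟩
      by_cases hi : i < N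
      · exact Or.inl ⟨hi, hP, hC⟩
      · right
        have hiN : N ≤ i := Nat.le_of_not_lt hi
        have hCi := hstab p i hiN
        rw [hCi] at hC
        exact ⟨hP, by omega, by omega⟩
    · rintro (⟨hi, hP, hC⟩ | ⟨hP, hle, hi⟩)
      · exact ⟨hP, hC⟩
      · refine ⟨hP, ?_⟩
        have hiN : N ≤ i := by omega
        rw [hstab p i hiN]
        omega
  have hdisj : Disjoint F1 F2 := by
    rw [Finset.disjoint_left]
    intro pa h1 h2
    rw [hmem2 pa] at h2
    simp only [hF1, Finset.mem_filter, Finset.mem_product, Finset.mem_univ, Finset.mem_range,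
      true_and] at h1
    obtain ⟨hlt, -⟩ := h1
    obtain ⟨-, hle, heq⟩ := h2
    omega
  calc Nat.card {pi : Fin l × ℕ // P pi.1 ∧ C pi.1 pi.2 = z}
      = Set.ncard {pa : Fin l × ℕ | P pa.1 ∧ C pa.1 pa.2 = z} := Nat.card_coe_set_eq _
    _ = (F1 ∪ F2).card := by rw [hset, Set.ncard_coe_finset]
    _ = F1.card + F2.card := Finset.card_union_of_disjoint hdisj
    _ = _ := by rw [hF2, Finset.card_image_of_injective _ hinj]

lemma multAt_d_eq_zero {l : ℕ} (d : ℕ) (c : Fin l → ℕ) (C : Fin l → ℕ → ℤ) (z : ℤ) :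
    multAt d c C d z = multAt d c C 0 z := by simp [multAt]

lemma multAt_mid {l d : ℕ} (hd : 1 ≤ d) (c : Fin l → ℕ) (hc : ∑ j, c j = d)
    (C : Fin l → ℕ → ℤ) (r : Fin l → ℤ) (N : ℕ)
    (hstab : ∀ p i, N ≤ i → C p i = r p - (i:ℤ))
    (t : ℕ) (ht0 : t ≠ 0) (htd : t ≠ d) (htle : t ≤ d) (z : ℤ) :
    multAt d c C t z
      = ((Finset.univ ×ˢ Finset.range N).filter
           (fun pa : Fin l × ℕ =>
             (psum c pa.1 : ℤ) + (d:ℤ) * C pa.1 pa.2 = (t:ℤ) + (d:ℤ) * z)).card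
        + (Finset.univ.filter (fun p : Fin l => psum c p = t ∧ z + (N:ℤ) ≤ r p)).card := by
  classical
  rw [multAt, if_neg (by tauto)]
  rw [natCard_split (fun p => psum c p = t) C r N hstab z]
  congr 1
  congr 1
  apply Finset.filter_congr
  rintro pa -
  have hm : psum c pa.1 ≤ d := by
    rw [← hc, psum]
    exact Finset.sum_le_sum_of_subset (Finset.subset_univ _)
  have hdne : ((d:ℤ)) ≠ 0 := by exact_mod_cast (by omega : d ≠ 0)
  constructor
  · rintro ⟨h1, h2⟩
    rw [h1, h2]
  · intro h
    have hdvd : (d:ℤ) ∣ ((psum c pa.1 : ℤ) - (t:ℤ)) := ⟨z - C pa.1 pa.2, by linarith⟩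
    have habs : |((psum c pa.1 : ℤ) - (t:ℤ))| < (d:ℤ) := by
      rw [abs_lt]
      constructor <;> [push_cast; push_cast] <;> omega
    have h0 : ((psum c pa.1 : ℤ) - (t:ℤ)) = 0 := Int.eq_zero_of_abs_lt_dvd hdvd habs
    have hmt : psum c pa.1 = t := by omega
    refine ⟨hmt, ?_⟩
    rw [hmt] at h
    have : (d:ℤ) * C pa.1 pa.2 = (d:ℤ) * z := by linarith
    exact mul_left_cancel₀ hdne this

lemma multAt_end {l d : ℕ} (hd : 1 ≤ d) (c : Fin l → ℕ) (hc : ∑ j, c j = d)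
    (C : Fin l → ℕ → ℤ) (r : Fin l → ℤ) (N : ℕ)
    (hstab : ∀ p i, N ≤ i → C p i = r p - (i:ℤ)) (z : ℤ) :
    multAt d c C 0 z
      = ((Finset.univ ×ˢ Finset.range N).filter
           (fun pa : Fin l × ℕ =>
             (psum c pa.1 : ℤ) + (d:ℤ) * C pa.1 pa.2 = (d:ℤ) * (z+1))).card
        + ((Finset.univ.filter (fun p : Fin l => psum c p = 0 ∧ (z+1) + (N:ℤ) ≤ r p)).card
           + (Finset.univ.filter (fun p : Fin l => psum c p = d ∧ z + (N:ℤ) ≤ r p)).card) := by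
  classical
  rw [multAt, if_pos (Or.inl rfl)]
  have e1 : Nat.card {pi : Fin l × ℕ // psum c pi.1 = 0 ∧ C pi.1 pi.2 - 1 = z}
      = Nat.card {pi : Fin l × ℕ // psum c pi.1 = 0 ∧ C pi.1 pi.2 = z + 1} :=
    Nat.card_congr (Equiv.subtypeEquivRight (fun pi => by
      constructor <;> rintro ⟨h1, h2⟩ <;> exact ⟨h1, by omega⟩))
  rw [e1, natCard_split (fun p => psum c p = 0) C r N hstab (z+1),
      natCard_split (fun p => psum c p = d) C r N hstab z]
  have hdne : ((d:ℤ)) ≠ 0 := by exact_mod_cast (by omega : d ≠ 0)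
  have hsplit : ((Finset.univ ×ˢ Finset.range N).filter
           (fun pa : Fin l × ℕ =>
             (psum c pa.1 : ℤ) + (d:ℤ) * C pa.1 pa.2 = (d:ℤ) * (z+1))).card
      = ((Finset.univ ×ˢ Finset.range N).filter
           (fun pa : Fin l × ℕ => psum c pa.1 = 0 ∧ C pa.1 pa.2 = z+1)).card
        + ((Finset.univ ×ˢ Finset.range N).filter
           (fun pa : Fin l × ℕ => psum c pa.1 = d ∧ C pa.1 pa.2 = z)).card := by
    rw [← Finset.card_union_of_disjoint (by
      rw [Finset.disjoint_left]
      intro pa h1 h2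
      simp only [Finset.mem_filter] at h1 h2
      omega), ← Finset.filter_or]
    congr 1
    apply Finset.filter_congr
    rintro pa -
    have hm : psum c pa.1 ≤ d := by
      rw [← hc, psum]
      exact Finset.sum_le_sum_of_subset (Finset.subset_univ _)
    constructor
    · intro h
      have hdvd : (d:ℤ) ∣ (psum c pa.1 : ℤ) := ⟨z + 1 - C pa.1 pa.2, by linarith⟩
      have hdvd' : d ∣ psum c pa.1 := by exact_mod_cast hdvd
      have h0d : psum c pa.1 = 0 ∨ psum c pa.1 = d := by
        rcases Nat.eq_zero_or_pos (psum c pa.1) with h0 | hpos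
        · exact Or.inl h0
        · exact Or.inr (le_antisymm hm (Nat.le_of_dvd hpos hdvd'))
      rcases h0d with h0 | hD
      · left
        refine ⟨h0, ?_⟩
        rw [h0] at h
        push_cast at h
        have : (d:ℤ) * C pa.1 pa.2 = (d:ℤ) * (z+1) := by linarith
        exact mul_left_cancel₀ hdne this
      · right
        refine ⟨hD, ?_⟩
        rw [hD] at h
        have : (d:ℤ) * C pa.1 pa.2 = (d:ℤ) * z := by push_cast at h ⊢; linarith
        exact mul_left_cancel₀ hdne this
    · rintro (⟨h1, h2⟩ | ⟨h1, h2⟩) <;> rw [h1, h2] <;> push_cast <;> ring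
  rw [hsplit]
  omega
/-- For `W = G(l,1,n)` data as above, two `l`-multipartitions `λ, μ` of `n`
have equal multisets `C(λ)_{[t]} = C(μ)_{[t]}` for all `0 ≤ t ≤ d` (i.e. the same
`J`-heart) iff `Σ_p x^{s_p}·Res_{λ^{(w⁻¹(p))}}(x^d) = Σ_p x^{s_p}·Res_{μ^{(w⁻¹(p))}}(x^d)`
where `s_p = d·r_p − d·r_{l−1} + m_p`. -/
theorem statement0 (l n d : ℕ) (hl : 1 ≤ l) (hd : 1 ≤ d)
    (c : Fin l → ℕ) (hc : ∑ j, c j = d)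
    (r : Fin l → ℤ) (hr : ∑ j, r j = 0)
    (w : Equiv.Perm (Fin l))
    (Λ M : Fin l → PartitionSeq)
    (hΛ : ∑ p, (Λ p).size = n) (hM : ∑ p, (M p).size = n) :
    (∀ t ≤ d, ∀ z : ℤ,
        multAt d c (fun p => (Λ (w⁻¹ p)).beta (r p)) t z =
          multAt d c (fun p => (M (w⁻¹ p)).beta (r p)) t z) ↔
      (∑ p : Fin l,
          LaurentPolynomial.T
              ((d : ℤ) * r p - (d : ℤ) * r ⟨l - 1, by omega⟩ + (psum c p : ℤ)) *
            (Λ (w⁻¹ p)).residuePow d =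
        ∑ p : Fin l,
          LaurentPolynomial.T
              ((d : ℤ) * r p - (d : ℤ) * r ⟨l - 1, by omega⟩ + (psum c p : ℤ)) *
            (M (w⁻¹ p)).residuePow d) := by
  classical
  obtain ⟨N, hlenΛ, hlenM⟩ : ∃ N : ℕ, (∀ p : Fin l, (Λ p).length ≤ N) ∧
      (∀ p : Fin l, (M p).length ≤ N) :=
    ⟨Finset.univ.sup (fun p : Fin l => max (Λ p).length (M p).length),
      fun p => le_trans (le_max_left _ _)
        (Finset.le_sup (f := fun p : Fin l => max (Λ p).length (M p).length)
          (Finset.mem_univ p)),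
      fun p => le_trans (le_max_right _ _)
        (Finset.le_sup (f := fun p : Fin l => max (Λ p).length (M p).length)
          (Finset.mem_univ p))⟩
  have hstab : ∀ (Ξ : Fin l → PartitionSeq), (∀ p, (Ξ p).length ≤ N) →
      ∀ (p : Fin l) (i : ℕ), N ≤ i → (Ξ (w⁻¹ p)).beta (r p) i = r p - (i:ℤ) := by
    intro Ξ hlen p i hi
    rw [PartitionSeq.beta, (Ξ (w⁻¹ p)).part_eq_zero_of_length_le (le_trans (hlen _) hi)]
    push_cast
    ring
  have hstabΛ := hstab Λ hlenΛ
  have hstabM := hstab M hlenM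
  -- the key algebraic identity
  have hid : ∀ (Ξ : Fin l → PartitionSeq), (∀ p, (Ξ p).length ≤ N) →
      (T (d:ℤ) - 1) * (∑ p : Fin l,
          T ((d : ℤ) * r p - (d : ℤ) * r ⟨l - 1, by omega⟩ + (psum c p : ℤ)) *
            (Ξ (w⁻¹ p)).residuePow d)
        = T (-((d : ℤ) * r ⟨l - 1, by omega⟩)) *
            ((∑ pa ∈ Finset.univ ×ˢ Finset.range N,
                T ((psum c pa.1 : ℤ) + (d:ℤ) * (Ξ (w⁻¹ pa.1)).beta (r pa.1) pa.2))
             - (∑ pa ∈ Finset.univ ×ˢ Finset.range N,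
                T ((psum c pa.1 : ℤ) + (d:ℤ) * (r pa.1 - (pa.2:ℤ))))) := by
    intro Ξ hlen
    calc (T (d:ℤ) - 1) * (∑ p : Fin l,
          T ((d : ℤ) * r p - (d : ℤ) * r ⟨l - 1, by omega⟩ + (psum c p : ℤ)) *
            (Ξ (w⁻¹ p)).residuePow d)
        = ∑ p : Fin l, ∑ a ∈ Finset.range N,
            (T (((d : ℤ) * r p - (d : ℤ) * r ⟨l - 1, by omega⟩ + (psum c p : ℤ))
                  + (d:ℤ) * (((Ξ (w⁻¹ p)).part a : ℤ) - (a:ℤ)))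
             - T (((d : ℤ) * r p - (d : ℤ) * r ⟨l - 1, by omega⟩ + (psum c p : ℤ))
                  - (d:ℤ) * (a:ℤ))) := by
          rw [Finset.mul_sum]
          exact Finset.sum_congr rfl fun p _ => key_identity _ d _ N (hlen _)
      _ = ∑ p : Fin l, ∑ a ∈ Finset.range N,
            (T (-((d : ℤ) * r ⟨l - 1, by omega⟩)) *
                T ((psum c p : ℤ) + (d:ℤ) * (Ξ (w⁻¹ p)).beta (r p) a)
             - T (-((d : ℤ) * r ⟨l - 1, by omega⟩)) *
                T ((psum c p : ℤ) + (d:ℤ) * (r p - (a:ℤ)))) := by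
          refine Finset.sum_congr rfl fun p _ => Finset.sum_congr rfl fun a _ => ?_
          rw [← T_add, ← T_add, PartitionSeq.beta]
          congr 2 <;> ring
      _ = _ := by
          rw [mul_sub, Finset.mul_sum, Finset.mul_sum, ← Finset.sum_sub_distrib,
            Finset.sum_product]
  -- coefficient comparison
  have hcards : ∀ CC CC' : Fin l → ℕ → ℤ,
      (∑ pa ∈ Finset.univ ×ˢ Finset.range N,
          (T ((psum c pa.1 : ℤ) + (d:ℤ) * CC pa.1 pa.2) : LaurentPolynomial ℤ))
        = (∑ pa ∈ Finset.univ ×ˢ Finset.range N,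
          T ((psum c pa.1 : ℤ) + (d:ℤ) * CC' pa.1 pa.2)) →
      ∀ e : ℤ,
        ((Finset.univ ×ˢ Finset.range N).filter
           (fun pa : Fin l × ℕ => (psum c pa.1 : ℤ) + (d:ℤ) * CC pa.1 pa.2 = e)).card
        = ((Finset.univ ×ˢ Finset.range N).filter
           (fun pa : Fin l × ℕ => (psum c pa.1 : ℤ) + (d:ℤ) * CC' pa.1 pa.2 = e)).card := by
    intro CC CC' hG e
    have h := congrArg (fun X : LaurentPolynomial ℤ => X.coeff e) hG
    rw [coeff_sum_T, coeff_sum_T] at h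
    exact_mod_cast h
  have hdZ : ((d:ℤ)) ≠ 0 := by exact_mod_cast (by omega : d ≠ 0)
  constructor
  · -- multisets → polynomials
    intro hmult
    have hG : (∑ pa ∈ Finset.univ ×ˢ Finset.range N,
          (T ((psum c pa.1 : ℤ) + (d:ℤ) * (Λ (w⁻¹ pa.1)).beta (r pa.1) pa.2)
            : LaurentPolynomial ℤ))
        = ∑ pa ∈ Finset.univ ×ˢ Finset.range N,
          T ((psum c pa.1 : ℤ) + (d:ℤ) * (M (w⁻¹ pa.1)).beta (r pa.1) pa.2) := by
      apply LaurentPolynomial.ext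
      intro e
      rw [coeff_sum_T, coeff_sum_T]
      norm_cast
      by_cases hmod : e % (d:ℤ) = 0
      · have hdm := Int.mul_ediv_add_emod e (d:ℤ)
        have he : (d:ℤ) * (e / (d:ℤ) - 1 + 1) = e := by
          have h1 : e / (d:ℤ) - 1 + 1 = e / (d:ℤ) := by ring
          rw [h1]; linarith
        have h1 := multAt_end hd c hc (fun p => (Λ (w⁻¹ p)).beta (r p)) r N hstabΛ
          (e / (d:ℤ) - 1)
        have h2 := multAt_end hd c hc (fun p => (M (w⁻¹ p)).beta (r p)) r N hstabM
          (e / (d:ℤ) - 1)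
        have h3 := hmult 0 (by omega) (e / (d:ℤ) - 1)
        rw [h1, h2] at h3
        rw [← he]
        omega
      · have hnn := Int.emod_nonneg e hdZ
        have hlt : e % (d:ℤ) < (d:ℤ) := Int.emod_lt_of_pos e (by omega)
        have ht : ((e % (d:ℤ)).toNat : ℤ) = e % (d:ℤ) := Int.toNat_of_nonneg hnn
        have hdm := Int.mul_ediv_add_emod e (d:ℤ)
        have he : (((e % (d:ℤ)).toNat : ℕ) : ℤ) + (d:ℤ) * (e / (d:ℤ)) = e := by
          rw [ht]; linarith
        have h1 := multAt_mid hd c hc (fun p => (Λ (w⁻¹ p)).beta (r p)) r N hstabΛ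
          (e % (d:ℤ)).toNat (by omega) (by omega) (by omega) (e / (d:ℤ))
        have h2 := multAt_mid hd c hc (fun p => (M (w⁻¹ p)).beta (r p)) r N hstabM
          (e % (d:ℤ)).toNat (by omega) (by omega) (by omega) (e / (d:ℤ))
        have h3 := hmult (e % (d:ℤ)).toNat (by omega) (e / (d:ℤ))
        rw [h1, h2] at h3
        rw [← he]
        omega
    have h1 := hid Λ hlenΛ
    have h2 := hid M hlenM
    rw [hG] at h1
    rw [← h2] at h1
    exact mul_left_cancel₀ (Td_sub_one_ne_zero hd) h1
  · -- polynomials → multisets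
    intro hF
    have hG : (∑ pa ∈ Finset.univ ×ˢ Finset.range N,
          (T ((psum c pa.1 : ℤ) + (d:ℤ) * (Λ (w⁻¹ pa.1)).beta (r pa.1) pa.2)
            : LaurentPolynomial ℤ))
        = ∑ pa ∈ Finset.univ ×ˢ Finset.range N,
          T ((psum c pa.1 : ℤ) + (d:ℤ) * (M (w⁻¹ pa.1)).beta (r pa.1) pa.2) := by
      have h1 := hid Λ hlenΛ
      have h2 := hid M hlenM
      rw [hF, h2] at h1
      have h3 := mul_left_cancel₀ (T_ne_zero' _) h1.symm
      have h4 := congrArg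
        (· + (∑ pa ∈ Finset.univ ×ˢ Finset.range N,
            (T ((psum c pa.1 : ℤ) + (d:ℤ) * (r pa.1 - (pa.2:ℤ))) : LaurentPolynomial ℤ))) h3
      simpa using h4
    have hcc := hcards (fun p => (Λ (w⁻¹ p)).beta (r p)) (fun p => (M (w⁻¹ p)).beta (r p)) hG
    intro t ht z
    by_cases h0 : t = 0 ∨ t = d
    · have hΛ0 : multAt d c (fun p => (Λ (w⁻¹ p)).beta (r p)) t z
          = multAt d c (fun p => (Λ (w⁻¹ p)).beta (r p)) 0 z := by
        rcases h0 with h | h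
        · rw [h]
        · rw [h, multAt_d_eq_zero]
      have hM0 : multAt d c (fun p => (M (w⁻¹ p)).beta (r p)) t z
          = multAt d c (fun p => (M (w⁻¹ p)).beta (r p)) 0 z := by
        rcases h0 with h | h
        · rw [h]
        · rw [h, multAt_d_eq_zero]
      rw [hΛ0, hM0,
        multAt_end hd c hc (fun p => (Λ (w⁻¹ p)).beta (r p)) r N hstabΛ z,
        multAt_end hd c hc (fun p => (M (w⁻¹ p)).beta (r p)) r N hstabM z,
        hcc ((d:ℤ) * (z+1))]
    · push_neg at h0
      rw [multAt_mid hd c hc (fun p => (Λ (w⁻¹ p)).beta (r p)) r N hstabΛ t h0.1 h0.2 ht z,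
        multAt_mid hd c hc (fun p => (M (w⁻¹ p)).beta (r p)) r N hstabM t h0.1 h0.2 ht z,
        hcc ((t:ℤ) + (d:ℤ) * z)]
end

section
/- Fix integers l ≥ 1, n ≥ 0, d ≥ 1, a tuple c = (c_0,…,c_{l−1}) of nonnegative integers with c_0+…+c_{l−1} = d, a tuple r = (r_0,…,r_{l−1}) of integers with r_0+…+r_{l−1} = 0, and a permutation w of {0,…,l−1}; set m_p = c_0+…+c_p, J = {j ∈ {0,…,l−1} : c_j = 0}, and I_t = {p : m_p = t} for 0 ≤ t ≤ d. Let λ be an l-multipartition of n and C = C(λ) the tuple with C^p = β^{r_p}(λ^{(w^{−1}(p))}). Let C̃ be an admissible tuple for C, let ν be the unique partition with β(ν) enumerating χ(C) in decreasing order, and let μ be the unique partition with β(μ) enumerating χ(C̃) in decreasing order. Then: there exists a finite sequence of partitions ν = ν_0, ν_1, …, ν_k in which each ν_{j+1} is obtained from ν_j by deleting a single J-removable node and in which ν_k has no J-removable node; and EVERY such sequence ends with ν_k = μ. In particular the J-heart of ν (the partition obtained from ν by removing J-removable nodes as often as possible) is well defined and equals μ. -/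
section AuxEnum

/-- The elements of the range of a strictly antitone sequence above `f n`
are exactly the first `n` values. -/
lemma strictAnti_above_eq {f : ℕ → ℤ} (hf : StrictAnti f) (n : ℕ) :
    {y | y ∈ Set.range f ∧ f n < y} = f '' Set.Iio n := by
  ext y
  constructor
  · rintro ⟨⟨m, rfl⟩, hlt⟩
    exact ⟨m, hf.lt_iff_gt.mp hlt, rfl⟩
  · rintro ⟨m, hm, rfl⟩
    exact ⟨⟨m, rfl⟩, hf hm⟩

lemma ncard_Iio (n : ℕ) : (Set.Iio n).ncard = n := by
  have : (Set.Iio n) = ↑(Finset.range n) := by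
    ext x; simp [Finset.mem_range]
  rw [this, Set.ncard_coe_finset, Finset.card_range]

lemma strictAnti_range_eq {f g : ℕ → ℤ} (hf : StrictAnti f) (hg : StrictAnti g)
    (h : Set.range f = Set.range g) : f = g := by
  funext n
  have hfn : f n ∈ Set.range g := h ▸ Set.mem_range_self n
  obtain ⟨m, hm⟩ := hfn
  have h1 : {y | y ∈ Set.range f ∧ f n < y} = {y | y ∈ Set.range g ∧ g m < y} := by
    rw [h, hm]
  rw [strictAnti_above_eq hf, strictAnti_above_eq hg] at h1
  have h2 : n = m := by
    have := congrArg Set.ncard h1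
    rwa [Set.ncard_image_of_injective _ hf.injective,
      Set.ncard_image_of_injective _ hg.injective, ncard_Iio, ncard_Iio] at this
  subst h2; exact hm.symm

lemma PartitionSeq.beta_strictAnti (lam : PartitionSeq) (r : ℤ) :
    StrictAnti (lam.beta r) := by
  intro a b hab
  have h := lam.antitone hab.le
  simp only [PartitionSeq.beta]
  omega

lemma PartitionSeq.eq_of_part_eq {lam mu : PartitionSeq} (h : lam.part = mu.part) :
    lam = mu := by
  obtain ⟨p, a, e⟩ := lam; obtain ⟨p', a', e'⟩ := mu
  dsimp at h; subst h; rfl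

lemma PartitionSeq.eq_of_beta_eq {lam mu : PartitionSeq}
    (h : lam.beta 0 = mu.beta 0) : lam = mu := by
  apply PartitionSeq.eq_of_part_eq
  funext i
  have := congrFun h i
  simp only [PartitionSeq.beta] at this
  omega

lemma PartitionSeq.eq_of_beta_range_eq {lam mu : PartitionSeq}
    (h : Set.range (lam.beta 0) = Set.range (mu.beta 0)) : lam = mu :=
  PartitionSeq.eq_of_beta_eq
    (strictAnti_range_eq (lam.beta_strictAnti 0) (mu.beta_strictAnti 0) h)

end AuxEnum
section AuxBridge

variable {l : ℕ}

/-- `z` has residue mod `l` in the zero-set of `c`. -/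
def Jres (c : Fin l → ℕ) (z : ℤ) : Prop :=
  ∃ j : Fin l, c j = 0 ∧ z ≡ (j : ℤ) [ZMOD (l : ℤ)]

lemma fin_coe_int_eq {j q : Fin l} (h : ((j : ℕ) : ℤ) ≡ ((q : ℕ) : ℤ) [ZMOD (l : ℤ)]) :
    j = q := by
  have hj := j.isLt; have hq := q.isLt
  have h1 : ((j : ℕ) : ℤ) % l = ((q : ℕ) : ℤ) % l := h
  rw [Int.emod_eq_of_lt (by positivity) (by exact_mod_cast hj),
    Int.emod_eq_of_lt (by positivity) (by exact_mod_cast hq)] at h1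
  exact Fin.ext (by exact_mod_cast h1)

lemma jres_iff_rep (hl : 0 < l) (c : Fin l → ℕ) (u : ℤ) (p : Fin l)
    (hp : u ≡ ((p : ℕ) : ℤ) [ZMOD (l : ℤ)]) :
    Jres c u ↔ c p = 0 := by
  constructor
  · rintro ⟨j, hj, hmod⟩
    have : j = p := fin_coe_int_eq (hmod.symm.trans hp)
    rwa [← this]
  · intro hc; exact ⟨p, hc, hp⟩

/-- Key arithmetic: residue representation. -/
lemma int_rep (hl : 0 < l) (u : ℤ) (p : Fin l) (m : ℤ) (h : u = (l : ℤ) * m + (p : ℕ)) :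
    u % l = ((p : ℕ) : ℤ) ∧ u / l = m := by
  have hp : ((p : ℕ) : ℤ) < l := by exact_mod_cast p.isLt
  have hp0 : (0 : ℤ) ≤ ((p : ℕ) : ℤ) := by positivity
  constructor
  · rw [h, add_comm, Int.add_mul_emod_self_left, Int.emod_eq_of_lt hp0 hp]
  · rw [h, add_comm, Int.add_mul_ediv_left _ _ (by exact_mod_cast hl.ne' : (l:ℤ) ≠ 0),
      Int.ediv_eq_zero_of_lt hp0 hp, zero_add]

lemma jres_of_rep (hl : 0 < l) (c : Fin l → ℕ) (u : ℤ) (p : Fin l) (m : ℤ)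
    (h : u = (l : ℤ) * m + (p : ℕ)) : Jres c u ↔ c p = 0 := by
  apply jres_iff_rep hl
  unfold Int.ModEq
  rw [(int_rep hl u p m h).1, Int.emod_eq_of_lt (by positivity) (by exact_mod_cast p.isLt)]

/-- Every integer has a representation. -/
lemma exists_rep (hl : 0 < l) (u : ℤ) : ∃ (p : Fin l) (m : ℤ), u = (l : ℤ) * m + (p : ℕ) := by
  have hl' : (0 : ℤ) < l := by exact_mod_cast hl
  refine ⟨⟨(u % l).toNat, ?_⟩, u / l, ?_⟩
  · have h1 := Int.emod_lt_of_pos u hl'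
    have h2 := Int.emod_nonneg u hl'.ne'
    omega
  · have h1 := Int.mul_ediv_add_emod u l
    have h2 := Int.emod_nonneg u hl'.ne'
    simp only [Fin.val_mk]
    omega

end AuxBridge
section AuxNode

/-- Remove the last node of row `a`. -/
def removeNode (lam : PartitionSeq) (a : ℕ) (h : lam.part (a + 1) < lam.part a) :
    PartitionSeq where
  part := Function.update lam.part a (lam.part a - 1)
  antitone := by
    intro i j hij
    rcases eq_or_ne i j with rfl | hne
    · exact le_rfl
    have hij' : i < j := lt_of_le_of_ne hij hne
    simp only [Function.update_apply]
    split_ifs with h1 h2 h2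
    · omega
    · have := lam.antitone (show i ≤ a by omega)
      omega
    · have := lam.antitone (show a + 1 ≤ j by omega)
      omega
    · exact lam.antitone hij
  eventually_zero := by
    obtain ⟨N, hN⟩ := lam.eventually_zero
    refine ⟨N + a + 1, fun i hi => ?_⟩
    simp only [Function.update_apply]
    split_ifs with h1
    · omega
    · exact hN i (by omega)

lemma removeNode_part (lam : PartitionSeq) (a : ℕ) (h : lam.part (a + 1) < lam.part a) :
    (removeNode lam a h).part = Function.update lam.part a (lam.part a - 1) := rfl

lemma removeNode_young (lam : PartitionSeq) (a : ℕ) (h : lam.part (a + 1) < lam.part a) :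
    YoungSet lam \ {(a, lam.part a - 1)} = YoungSet (removeNode lam a h) := by
  ext ⟨x, y⟩
  simp only [YoungSet, Set.mem_diff, Set.mem_setOf_eq, Set.mem_singleton_iff, Prod.mk.injEq,
    removeNode, Function.update_apply]
  split_ifs with h1
  · subst h1; constructor
    · rintro ⟨h2, h3⟩; omega
    · intro h2; omega
  · constructor
    · rintro ⟨h2, _⟩; exact h2
    · intro h2; exact ⟨h2, by intro hc; exact h1 hc.1⟩

lemma removeNode_beta_range (lam : PartitionSeq) (a : ℕ)
    (h : lam.part (a + 1) < lam.part a) :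
    Set.range ((removeNode lam a h).beta 0) =
      insert (lam.beta 0 a - 1) (Set.range (lam.beta 0) \ {lam.beta 0 a}) := by
  have hb : ∀ i, (removeNode lam a h).beta 0 i =
      if i = a then lam.beta 0 a - 1 else lam.beta 0 i := by
    intro i
    simp only [PartitionSeq.beta, removeNode, Function.update_apply]
    split_ifs with h1
    · rw [h1]
      omega
    · rfl
  have hinj := lam.beta_strictAnti 0 |>.injective
  ext z
  simp only [Set.mem_range, Set.mem_insert_iff, Set.mem_diff, Set.mem_singleton_iff]
  constructor
  · rintro ⟨i, hi⟩
    rw [hb] at hi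
    split_ifs at hi with h1
    · exact Or.inl hi.symm
    · refine Or.inr ⟨⟨i, hi⟩, fun hc => h1 (hinj (hi.trans hc ▸ rfl))⟩
  · rintro (rfl | ⟨⟨i, hi⟩, hne⟩)
    · exact ⟨a, by rw [hb]; simp⟩
    · refine ⟨i, by rw [hb, if_neg (fun hc => hne (by rw [← hi, hc]))]; exact hi⟩

/-- Characterisation of removable nodes. -/
lemma isRemovableNode_iff (lam : PartitionSeq) (a b : ℕ) :
    IsRemovableNode lam (a, b) ↔ b + 1 = lam.part a ∧ lam.part (a + 1) < lam.part a := by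
  constructor
  · rintro ⟨hmem, mu, hdiag⟩
    have hmem' : b < lam.part a := hmem
    unfold IsDiagramOf at hdiag
    have hb : b + 1 = lam.part a := by
      by_contra hc
      have h1 : (a, b + 1) ∈ YoungSet lam \ {(a, b)} := by
        refine ⟨show b + 1 < lam.part a by omega, by simp⟩
      rw [hdiag] at h1
      have h2 : (a, b) ∈ YoungSet mu := by
        have : b + 1 < mu.part a := h1
        exact show b < mu.part a by omega
      rw [← hdiag] at h2
      exact h2.2 rfl
    refine ⟨hb, ?_⟩
    by_contra hc
    have heq : lam.part (a + 1) = lam.part a := le_antisymm (lam.antitone (by omega)) (by omega)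
    have h1 : (a + 1, b) ∈ YoungSet lam \ {(a, b)} := by
      refine ⟨show b < lam.part (a+1) by omega, by simp⟩
    rw [hdiag] at h1
    have h2 : (a, b) ∈ YoungSet mu := by
      have hlt : b < mu.part (a + 1) := h1
      exact show b < mu.part a from lt_of_lt_of_le hlt (mu.antitone (by omega))
    rw [← hdiag] at h2
    exact h2.2 rfl
  · rintro ⟨hb, hstep⟩
    refine ⟨show b < lam.part a by omega, removeNode lam a hstep, ?_⟩
    unfold IsDiagramOf
    rw [show b = lam.part a - 1 by omega]
    exact removeNode_young lam a hstep

/-- The parts of a partition are determined by its Young set. -/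
lemma part_eq_of_young_eq {lam mu : PartitionSeq} (h : YoungSet lam = YoungSet mu) :
    lam = mu := by
  apply PartitionSeq.eq_of_part_eq
  funext x
  by_contra hc
  rcases Nat.lt_or_ge (lam.part x) (mu.part x) with hlt | hge
  · have : (x, lam.part x) ∈ YoungSet mu := hlt
    rw [← h] at this
    exact absurd (show lam.part x < lam.part x from this) (lt_irrefl _)
  · have hlt : mu.part x < lam.part x := by omega
    have : (x, mu.part x) ∈ YoungSet lam := hlt
    rw [h] at this
    exact absurd (show mu.part x < mu.part x from this) (lt_irrefl _)

end AuxNode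
section AuxBridge2

variable {l : ℕ}

/-- the set of residues used in the theorem -/
def JT (l : ℕ) (c : Fin l → ℕ) : Set ℕ := {j : ℕ | ∃ hj : j < l, c ⟨j, hj⟩ = 0}

lemma jt_iff (c : Fin l → ℕ) (u : ℤ) :
    (∃ j ∈ JT l c, u ≡ (j : ℤ) [ZMOD (l : ℤ)]) ↔ Jres c u := by
  constructor
  · rintro ⟨j, ⟨hj, hcj⟩, hmod⟩
    exact ⟨⟨j, hj⟩, hcj, hmod⟩
  · rintro ⟨j, hcj, hmod⟩
    exact ⟨(j : ℕ), ⟨j.isLt, by rwa [Fin.eta]⟩, hmod⟩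

/-- `z - 1 ∉ range (beta)` given row data. -/
lemma beta_pred_not_mem (lam : PartitionSeq) (a : ℕ) (hb : lam.part (a + 1) < lam.part a) :
    lam.beta 0 a - 1 ∉ Set.range (lam.beta 0) := by
  rintro ⟨i, hi⟩
  have hs := lam.beta_strictAnti 0
  rcases lt_trichotomy i (a + 1) with hlt | heq | hgt
  · rcases Nat.lt_or_ge i a with h1 | h1
    · have := hs h1
      omega
    · have hia : i = a := by omega
      rw [hia] at hi
      omega
  · rw [heq] at hi
    simp only [PartitionSeq.beta] at hi ⊢
    omega
  · have := hs (show a + 1 < i from hgt)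
    have h2 : lam.beta 0 (a+1) ≤ lam.beta 0 a - 2 := by
      simp only [PartitionSeq.beta]
      omega
    omega

/-- Characterisation of existence of a `J`-removable node on the β-set side. -/
lemma exists_setRemovable_iff (hl : 0 < l) (c : Fin l → ℕ) (lam : PartitionSeq) :
    (∃ ab : ℕ × ℕ, IsSetRemovable l (JT l c) lam ab) ↔
    ∃ z ∈ Set.range (lam.beta 0), z - 1 ∉ Set.range (lam.beta 0) ∧ Jres c (z - 1) := by
  constructor
  · rintro ⟨⟨a, b⟩, j, hj, hrem, hcong⟩
    obtain ⟨hb, hstep⟩ := (isRemovableNode_iff lam a b).mp hrem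
    refine ⟨lam.beta 0 a, Set.mem_range_self a, beta_pred_not_mem lam a hstep, ?_⟩
    rw [← jt_iff]
    refine ⟨j, hj, ?_⟩
    have : lam.beta 0 a - 1 = (b : ℤ) - (a : ℤ) := by
      simp only [PartitionSeq.beta]; omega
    rwa [this]
  · rintro ⟨z, ⟨a, rfl⟩, hz1, hJ⟩
    have hpos : 0 < lam.part a := by
      by_contra hc
      have h0 : lam.part a = 0 := by omega
      have h1 : lam.part (a + 1) = 0 := by
        have := lam.antitone (show a ≤ a + 1 by omega); omega
      exact hz1 ⟨a + 1, by simp only [PartitionSeq.beta]; omega⟩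
    have hstep : lam.part (a + 1) < lam.part a := by
      by_contra hc
      have heq : lam.part (a + 1) = lam.part a :=
        le_antisymm (lam.antitone (show a ≤ a + 1 by omega)) (by omega)
      exact hz1 ⟨a + 1, by simp only [PartitionSeq.beta]; omega⟩
    obtain ⟨j, hjJ, hmod⟩ := (jt_iff c _).mpr hJ
    refine ⟨(a, lam.part a - 1), j, hjJ, (isRemovableNode_iff lam a _).mpr ⟨by omega, hstep⟩, ?_⟩
    have : ((lam.part a - 1 : ℕ) : ℤ) - (a : ℤ) = lam.beta 0 a - 1 := by
      simp only [PartitionSeq.beta]; omega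
    rwa [this]

/-- From β-set data, produce the partition one step down, with control on everything. -/
lemma exists_removeStep (hl : 0 < l) (c : Fin l → ℕ) (lam : PartitionSeq) (z : ℤ)
    (hz : z ∈ Set.range (lam.beta 0)) (hz1 : z - 1 ∉ Set.range (lam.beta 0))
    (hJ : Jres c (z - 1)) :
    ∃ mu : PartitionSeq, RemoveStep l (JT l c) lam mu ∧
      Set.range (mu.beta 0) = insert (z - 1) (Set.range (lam.beta 0) \ {z}) := by
  obtain ⟨a, rfl⟩ := hz
  have hpos : 0 < lam.part a := by
    by_contra hc
    have h1 : lam.part (a + 1) = 0 := by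
      have := lam.antitone (show a ≤ a + 1 by omega); omega
    exact hz1 ⟨a + 1, by simp only [PartitionSeq.beta]; omega⟩
  have hstep : lam.part (a + 1) < lam.part a := by
    by_contra hc
    have heq : lam.part (a + 1) = lam.part a :=
      le_antisymm (lam.antitone (show a ≤ a + 1 by omega)) (by omega)
    exact hz1 ⟨a + 1, by simp only [PartitionSeq.beta]; omega⟩
  obtain ⟨j, hjJ, hmod⟩ := (jt_iff c _).mpr hJ
  refine ⟨removeNode lam a hstep, ⟨(a, lam.part a - 1), ⟨j, hjJ,
    (isRemovableNode_iff lam a _).mpr ⟨by omega, hstep⟩, ?_⟩,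
    (removeNode_young lam a hstep).symm ▸ rfl⟩, removeNode_beta_range lam a hstep⟩
  have : ((lam.part a - 1 : ℕ) : ℤ) - (a : ℤ) = lam.beta 0 a - 1 := by
    simp only [PartitionSeq.beta]; omega
  rwa [this]

/-- Any `RemoveStep` is a β-set move. -/
lemma removeStep_move (hl : 0 < l) (c : Fin l → ℕ) {lam mu : PartitionSeq}
    (h : RemoveStep l (JT l c) lam mu) :
    ∃ z, z ∈ Set.range (lam.beta 0) ∧ z - 1 ∉ Set.range (lam.beta 0) ∧ Jres c (z - 1) ∧
      Set.range (mu.beta 0) = insert (z - 1) (Set.range (lam.beta 0) \ {z}) := by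
  obtain ⟨⟨a, b⟩, ⟨j, hjJ, hrem, hcong⟩, hdiag⟩ := h
  obtain ⟨hb, hstep⟩ := (isRemovableNode_iff lam a b).mp hrem
  have hmu : mu = removeNode lam a hstep := by
    apply part_eq_of_young_eq
    unfold IsDiagramOf at hdiag
    rw [← hdiag, show b = lam.part a - 1 by omega, removeNode_young lam a hstep]
  refine ⟨lam.beta 0 a, Set.mem_range_self a, beta_pred_not_mem lam a hstep, ?_, ?_⟩
  · rw [← jt_iff]
    refine ⟨j, hjJ, ?_⟩
    have : lam.beta 0 a - 1 = (b : ℤ) - (a : ℤ) := by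
      simp only [PartitionSeq.beta]; omega
    rwa [this]
  · rw [hmu]
    exact removeNode_beta_range lam a hstep

end AuxBridge2
section AuxFb

variable {l : ℕ}

lemma exists_nonJres (hl : 0 < l) {c : Fin l → ℕ} (hex : ∃ q, c q ≠ 0) (z : ℤ) :
    ∃ x, z - l < x ∧ x ≤ z ∧ ¬ Jres c (x - 1) := by
  obtain ⟨q, hq⟩ := hex
  have hl' : (0 : ℤ) < l := by exact_mod_cast hl
  set w : ℤ := z - 1 - ((z - 1 - (q : ℕ)) % l) with hw
  have h1 : 0 ≤ (z - 1 - (q : ℕ)) % l := Int.emod_nonneg _ hl'.ne'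
  have h2 : (z - 1 - (q : ℕ)) % l < l := Int.emod_lt_of_pos _ hl'
  have hdvd : (l : ℤ) ∣ (z - 1 - (q : ℕ)) - ((z - 1 - (q : ℕ)) % l) := Int.dvd_self_sub_of_emod_eq rfl
  obtain ⟨m', hm'⟩ := hdvd
  have hwrep : w = (l : ℤ) * m' + (q : ℕ) := by omega
  refine ⟨w + 1, by omega, by omega, ?_⟩
  rw [show w + 1 - 1 = w by ring, jres_of_rep hl c w q m' hwrep]
  exact hq

lemma fbP_exists (hl : 0 < l) {c : Fin l → ℕ} (hex : ∃ q, c q ≠ 0) (z : ℤ) :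
    ∃ x, (x ≤ z ∧ ¬ Jres c (x - 1)) ∧ ∀ y, (y ≤ z ∧ ¬ Jres c (y - 1)) → y ≤ x := by
  obtain ⟨x, _, hx2, hx3⟩ := exists_nonJres hl hex z
  exact Int.exists_greatest_of_bdd ⟨z, fun y hy => hy.1⟩ ⟨x, hx2, hx3⟩

open Classical in
noncomputable def fb (c : Fin l → ℕ) (z : ℤ) : ℤ :=
  if h : ∃ x, (x ≤ z ∧ ¬ Jres c (x - 1)) ∧ ∀ y, (y ≤ z ∧ ¬ Jres c (y - 1)) → y ≤ x
  then h.choose else z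

/-- number of elements of `B` in the block with bottom `x`. -/
noncomputable def cnt (c : Fin l → ℕ) (B : Set ℤ) (x : ℤ) : ℕ :=
  (B ∩ {z : ℤ | fb c z = x}).ncard

/-- Terminality of a β-set. -/
def TerminalSet (c : Fin l → ℕ) (B : Set ℤ) : Prop :=
  ∀ z ∈ B, Jres c (z - 1) → z - 1 ∈ B

variable (hl : 0 < l) {c : Fin l → ℕ} (hex : ∃ q, c q ≠ 0)

include hl hex

lemma fb_spec (z : ℤ) :
    (fb c z ≤ z ∧ ¬ Jres c (fb c z - 1)) ∧
      ∀ y, (y ≤ z ∧ ¬ Jres c (y - 1)) → y ≤ fb c z := by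
  have h := fbP_exists hl hex z
  rw [fb, dif_pos h]
  exact h.choose_spec

lemma fb_le (z : ℤ) : fb c z ≤ z := ((fb_spec hl hex z).1).1

lemma fb_not_jres (z : ℤ) : ¬ Jres c (fb c z - 1) := ((fb_spec hl hex z).1).2

lemma fb_max {y z : ℤ} (h1 : y ≤ z) (h2 : ¬ Jres c (y - 1)) : y ≤ fb c z :=
  (fb_spec hl hex z).2 y ⟨h1, h2⟩

lemma fb_gt (z : ℤ) : z - l < fb c z := by
  obtain ⟨x, hx1, hx2, hx3⟩ := exists_nonJres hl hex z
  exact lt_of_lt_of_le hx1 (fb_max hl hex hx2 hx3)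

lemma jres_of_between {w z : ℤ} (h1 : fb c z < w) (h2 : w ≤ z) : Jres c (w - 1) := by
  by_contra hc
  exact absurd (fb_max hl hex h2 hc) (by omega)

lemma fb_eq_iff {x z : ℤ} :
    fb c z = x ↔ x ≤ z ∧ ¬ Jres c (x - 1) ∧ ∀ w, x < w → w ≤ z → Jres c (w - 1) := by
  constructor
  · rintro rfl
    exact ⟨fb_le hl hex z, fb_not_jres hl hex z, fun w hw1 hw2 => jres_of_between hl hex hw1 hw2⟩
  · rintro ⟨h1, h2, h3⟩
    have hx : x ≤ fb c z := fb_max hl hex h1 h2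
    rcases eq_or_lt_of_le hx with heq | hlt
    · exact heq.symm
    · exact absurd (h3 _ hlt (fb_le hl hex z)) (fb_not_jres hl hex z)

lemma fb_congr {z z' : ℤ} (h1 : fb c z ≤ z') (h2 : z' ≤ z) : fb c z' = fb c z := by
  rw [fb_eq_iff hl hex]
  exact ⟨h1, fb_not_jres hl hex z, fun w hw1 hw2 =>
    jres_of_between hl hex hw1 (le_trans hw2 h2)⟩

lemma fb_self {z : ℤ} (h : ¬ Jres c (z - 1)) : fb c z = z :=
  (fb_eq_iff hl hex).mpr ⟨le_rfl, h, fun w hw1 hw2 => absurd (lt_of_lt_of_le hw1 hw2) (lt_irrefl _)⟩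

lemma fb_pred {z : ℤ} (h : Jres c (z - 1)) : fb c z ≤ z - 1 ∧ fb c (z - 1) = fb c z := by
  have h1 : fb c z ≤ z - 1 := by
    rcases eq_or_lt_of_le (fb_le hl hex z) with heq | hlt
    · have h2 := fb_not_jres hl hex z
      rw [heq] at h2
      exact absurd h h2
    · omega
  exact ⟨h1, fb_congr hl hex h1 (by omega)⟩

lemma fiber_subset (x : ℤ) : {z : ℤ | fb c z = x} ⊆ Set.Ico x (x + l) := by
  intro z hz
  have h1 := fb_le hl hex z
  have h2 := fb_gt hl hex z
  simp only [Set.mem_setOf_eq] at hz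
  simp only [Set.mem_Ico]
  omega

lemma fiber_finite (x : ℤ) : {z : ℤ | fb c z = x}.Finite :=
  Set.Finite.subset (Set.finite_Ico _ _) (fiber_subset hl hex x)

lemma cnt_empty_of_jres {x : ℤ} (h : Jres c (x - 1)) (B : Set ℤ) : cnt c B x = 0 := by
  have : B ∩ {z : ℤ | fb c z = x} = ∅ := by
    ext z
    simp only [Set.mem_inter_iff, Set.mem_setOf_eq, Set.mem_empty_iff_false, iff_false]
    rintro ⟨-, rfl⟩
    exact fb_not_jres hl hex z h
  rw [cnt, this, Set.ncard_empty]

/-- A move preserves all block counts. -/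
lemma cnt_move {z : ℤ} {B : Set ℤ} (hz : z ∈ B) (hz1 : z - 1 ∉ B) (hJ : Jres c (z - 1))
    (x : ℤ) : cnt c (insert (z - 1) (B \ {z})) x = cnt c B x := by
  unfold cnt
  obtain ⟨hle, hfb⟩ := fb_pred hl hex hJ
  by_cases hx : fb c z = x
  · have hz1f : fb c (z - 1) = x := by rw [hfb, hx]
    have hset : insert (z - 1) (B \ {z}) ∩ {w : ℤ | fb c w = x}
        = insert (z - 1) ((B ∩ {w : ℤ | fb c w = x}) \ {z}) := by
      ext w
      simp only [Set.mem_inter_iff, Set.mem_insert_iff, Set.mem_diff, Set.mem_setOf_eq,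
        Set.mem_singleton_iff]
      constructor
      · rintro ⟨(rfl | ⟨hwB, hwz⟩), hwf⟩
        · exact Or.inl rfl
        · exact Or.inr ⟨⟨hwB, hwf⟩, hwz⟩
      · rintro (rfl | ⟨⟨hwB, hwf⟩, hwz⟩)
        · exact ⟨Or.inl rfl, hz1f⟩
        · exact ⟨Or.inr ⟨hwB, hwz⟩, hwf⟩
    rw [hset]
    have hfin : (B ∩ {w : ℤ | fb c w = x}).Finite :=
      Set.Finite.subset (fiber_finite hl hex x) Set.inter_subset_right
    have hzmem : z ∈ B ∩ {w : ℤ | fb c w = x} := ⟨hz, hx⟩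
    have hz1nm : z - 1 ∉ (B ∩ {w : ℤ | fb c w = x}) \ {z} := fun hc => hz1 hc.1.1
    rw [Set.ncard_insert_of_notMem hz1nm hfin.diff]
    rw [Set.ncard_diff_singleton_of_mem hzmem]
    have hpos : 0 < (B ∩ {w : ℤ | fb c w = x}).ncard := (Set.ncard_pos hfin).mpr ⟨z, hzmem⟩
    omega
  · have hz1f : fb c (z - 1) ≠ x := by rw [hfb]; exact hx
    have hset : insert (z - 1) (B \ {z}) ∩ {w : ℤ | fb c w = x}
        = B ∩ {w : ℤ | fb c w = x} := by
      ext w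
      simp only [Set.mem_inter_iff, Set.mem_insert_iff, Set.mem_diff, Set.mem_setOf_eq,
        Set.mem_singleton_iff]
      constructor
      · rintro ⟨(rfl | ⟨hwB, hwz⟩), hwf⟩
        · exact absurd hwf hz1f
        · exact ⟨hwB, hwf⟩
      · rintro ⟨hwB, hwf⟩
        refine ⟨Or.inr ⟨hwB, ?_⟩, hwf⟩
        rintro rfl
        exact hx hwf
    rw [hset]

lemma terminal_icc {B : Set ℤ} (hT : TerminalSet c B) {x z : ℤ} (hz : z ∈ B)
    (hfz : fb c z = x) : ∀ w, x ≤ w → w ≤ z → w ∈ B ∧ fb c w = x := by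
  intro w hw1 hw2
  obtain ⟨n, hn⟩ : ∃ n : ℕ, z - w = n := ⟨(z - w).toNat, by omega⟩
  induction n generalizing w with
  | zero =>
    have : w = z := by omega
    exact this ▸ ⟨hz, hfz⟩
  | succ n ih =>
    have hw1' : w + 1 ≤ z := by omega
    obtain ⟨hwB, hwf⟩ := ih (w + 1) (by omega) hw1' (by omega)
    have hJ : Jres c w := by
      have := jres_of_between hl hex (z := w + 1) (w := w + 1) (by omega) le_rfl
      simpa using this
    have hwB' : w ∈ B := by
      have := hT (w + 1) hwB (by simpa using hJ)
      simpa using this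
    refine ⟨hwB', ?_⟩
    have := fb_congr hl hex (z := w + 1) (z' := w) (by omega) (by omega)
    rw [this, hwf]

lemma terminal_mem_iff {B : Set ℤ} (hT : TerminalSet c B) (z : ℤ) :
    z ∈ B ↔ (z - fb c z) < (cnt c B (fb c z) : ℤ) := by
  set x := fb c z with hx
  have hc2 : cnt c B x = (B ∩ {w : ℤ | fb c w = x}).ncard := rfl
  have hfin : (B ∩ {w : ℤ | fb c w = x}).Finite :=
    Set.Finite.subset (fiber_finite hl hex x) Set.inter_subset_right
  constructor
  · intro hz
    have hsub : Set.Icc x z ⊆ B ∩ {w : ℤ | fb c w = x} := by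
      intro w hw
      obtain ⟨h1, h2⟩ := terminal_icc hl hex hT hz hx.symm w hw.1 hw.2
      exact ⟨h1, h2⟩
    have hcard : (Set.Icc x z).ncard ≤ (B ∩ {w : ℤ | fb c w = x}).ncard :=
      Set.ncard_le_ncard hsub hfin
    have : (Set.Icc x z).ncard = (z + 1 - x).toNat := by
      rw [show Set.Icc x z = ↑(Finset.Icc x z) by simp, Set.ncard_coe_finset, Int.card_Icc]
    have hxz : x ≤ z := fb_le hl hex z
    rw [hc2]
    omega
  · intro hcnt
    by_contra hzB
    have hsub : B ∩ {w : ℤ | fb c w = x} ⊆ Set.Icc x (z - 1) := by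
      rintro w ⟨hwB, hwf⟩
      simp only [Set.mem_setOf_eq] at hwf
      have hwx : x ≤ w := hwf ▸ fb_le hl hex w
      simp only [Set.mem_Icc]
      refine ⟨hwx, ?_⟩
      by_contra hc
      have hzw : z ≤ w := by omega
      have := (terminal_icc hl hex hT hwB hwf z (fb_le hl hex z) hzw).1
      exact hzB this
    have hcard : (B ∩ {w : ℤ | fb c w = x}).ncard ≤ (Set.Icc x (z - 1)).ncard :=
      Set.ncard_le_ncard hsub (Set.finite_Icc _ _)
    have : (Set.Icc x (z - 1)).ncard = (z - x).toNat := by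
      rw [show Set.Icc x (z-1) = ↑(Finset.Icc x (z-1)) by simp, Set.ncard_coe_finset,
        Int.card_Icc]
      congr 1; ring
    have hxz : x ≤ z := fb_le hl hex z
    rw [hc2] at hcnt
    omega

lemma terminal_eq {B B' : Set ℤ} (hT : TerminalSet c B) (hT' : TerminalSet c B')
    (h : ∀ x, cnt c B x = cnt c B' x) : B = B' := by
  ext z
  rw [terminal_mem_iff hl hex hT z, terminal_mem_iff hl hex hT' z, h]

end AuxFb
section AuxMeasure

variable {l : ℕ}

/-- the set of (bead, hole-below-in-block) pairs. -/
def prs (c : Fin l → ℕ) (B : Set ℤ) : Set (ℤ × ℤ) :=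
  {p : ℤ × ℤ | p.1 ∈ B ∧ p.2 ∉ B ∧ fb c p.1 ≤ p.2 ∧ p.2 < p.1}

noncomputable def msr (c : Fin l → ℕ) (B : Set ℤ) : ℕ := (prs c B).ncard

lemma prs_finite_of_beta (c : Fin l → ℕ) (lam : PartitionSeq) :
    (prs c (Set.range (lam.beta 0))).Finite := by
  obtain ⟨N, hN⟩ := lam.eventually_zero
  have hlow : ∀ z : ℤ, z ≤ -(N : ℤ) → z ∈ Set.range (lam.beta 0) := by
    intro z hz
    refine ⟨(-z).toNat, ?_⟩
    have h1 : (N : ℤ) ≤ (-z).toNat := by omega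
    have h2 := hN (-z).toNat (by exact_mod_cast h1)
    simp only [PartitionSeq.beta, h2]
    omega
  have hhigh : ∀ z ∈ Set.range (lam.beta 0), z ≤ lam.beta 0 0 := by
    rintro z ⟨i, rfl⟩
    exact (lam.beta_strictAnti 0).antitone (Nat.zero_le i)
  apply Set.Finite.subset (Set.Finite.prod
    (Set.finite_Icc (-(N : ℤ) - 1) (lam.beta 0 0))
    (Set.finite_Icc (-(N : ℤ) - 1) (lam.beta 0 0)))
  rintro ⟨a, h⟩ ⟨ha, hh, hf, hlt⟩
  have h1 : ¬ h ≤ -(N : ℤ) := fun hc => hh (hlow h hc)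
  have h2 : a ≤ lam.beta 0 0 := hhigh a ha
  simp only [Set.mem_prod, Set.mem_Icc]
  constructor <;> omega

variable (hl : 0 < l) {c : Fin l → ℕ} (hex : ∃ q, c q ≠ 0)
include hl hex

lemma msr_pos {B : Set ℤ} (hfin : (prs c B).Finite) {z : ℤ} (hz : z ∈ B) (hz1 : z - 1 ∉ B)
    (hJ : Jres c (z - 1)) : 0 < msr c B := by
  have hmem : (z, z - 1) ∈ prs c B := by
    refine ⟨hz, hz1, ?_, by omega⟩
    exact (fb_pred hl hex hJ).1
  exact (Set.ncard_pos hfin).mpr ⟨_, hmem⟩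

lemma msr_lt {B : Set ℤ} (hfin : (prs c B).Finite) {z : ℤ} (hz : z ∈ B) (hz1 : z - 1 ∉ B)
    (hJ : Jres c (z - 1)) :
    msr c (insert (z - 1) (B \ {z})) < msr c B := by
  set B' := insert (z - 1) (B \ {z}) with hB'
  have hzB' : z ∉ B' := by
    intro h
    rcases h with h | h
    · omega
    · exact h.2 rfl
  have hz1B' : z - 1 ∈ B' := Set.mem_insert _ _
  have hBB' : ∀ u, u ∈ B' → u ≠ z - 1 → u ∈ B := by
    intro u hu hne
    rcases hu with rfl | ⟨h1, -⟩
    · exact absurd rfl hne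
    · exact h1
  have hB'B : ∀ u, u ∉ B' → u ≠ z → u ∉ B := by
    intro u hu hne hc
    exact hu (Set.mem_insert_iff.mpr (Or.inr ⟨hc, hne⟩))
  set φ : ℤ × ℤ → ℤ × ℤ := fun p =>
    (if p.1 = z - 1 then z else p.1, if p.2 = z then z - 1 else p.2) with hφ
  have himg : φ '' (prs c B') ⊆ prs c B \ {(z, z - 1)} := by
    rintro ⟨a', h'⟩ ⟨⟨a, h⟩, ⟨ha, hh, hf, hlt⟩, heq⟩
    replace ha : a ∈ B' := ha
    replace hh : h ∉ B' := hh
    replace hf : fb c a ≤ h := hf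
    replace hlt : h < a := hlt
    have hanez : a ≠ z := fun hc => hzB' (hc ▸ ha)
    have hhnez1 : h ≠ z - 1 := fun hc => hh (hc ▸ hz1B')
    simp only [hφ, Prod.mk.injEq] at heq
    obtain ⟨heq1, heq2⟩ := heq
    by_cases ha1 : a = z - 1
    · -- bead was the moved one
      have hhz : h ≠ z := by omega
      rw [if_pos ha1] at heq1
      rw [if_neg hhz] at heq2
      subst heq1; subst heq2
      have hfa : fb c (z - 1) = fb c z := (fb_pred hl hex hJ).2
      refine ⟨⟨hz, hB'B h hh hhz, ?_, show h < z by omega⟩, ?_⟩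
      · rw [← hfa, ← ha1]
        exact hf
      · simp only [Set.mem_singleton_iff, Prod.mk.injEq]
        rintro ⟨-, h2⟩
        exact hhnez1 h2
    · rw [if_neg ha1] at heq1
      subst heq1
      have haB : a ∈ B := hBB' a ha ha1
      by_cases hh1 : h = z
      · rw [if_pos hh1] at heq2
        subst heq2
        rw [hh1] at hf hlt
        have hfz : fb c a ≤ z - 1 := by
          rcases eq_or_lt_of_le hf with heqf | hltf
          · -- fb c a = h = z, but then ¬ Jres c (z - 1), contradiction
            have h2 := fb_not_jres hl hex a
            rw [heqf] at h2
            exact absurd hJ h2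
          · omega
        refine ⟨⟨haB, hz1, hfz, show z - 1 < a by omega⟩, ?_⟩
        simp only [Set.mem_singleton_iff, Prod.mk.injEq]
        rintro ⟨h1, -⟩
        exact ha1 (by omega)
      · rw [if_neg hh1] at heq2
        subst heq2
        refine ⟨⟨haB, hB'B h hh hh1, hf, hlt⟩, ?_⟩
        simp only [Set.mem_singleton_iff, Prod.mk.injEq]
        rintro ⟨h1, -⟩
        exact ha1 (by omega)
  have hinj : Set.InjOn φ (prs c B') := by
    rintro ⟨a1, h1⟩ ⟨ha1, hh1, -, -⟩ ⟨a2, h2⟩ ⟨ha2, hh2, -, -⟩ heq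
    have ha1z : a1 ≠ z := fun hc => hzB' (hc ▸ ha1)
    have ha2z : a2 ≠ z := fun hc => hzB' (hc ▸ ha2)
    have hh1z : h1 ≠ z - 1 := fun hc => hh1 (hc ▸ hz1B')
    have hh2z : h2 ≠ z - 1 := fun hc => hh2 (hc ▸ hz1B')
    simp only [hφ, Prod.mk.injEq] at heq
    obtain ⟨e1, e2⟩ := heq
    have ea : a1 = a2 := by
      split_ifs at e1 <;> omega
    have eh : h1 = h2 := by
      split_ifs at e2 <;> omega
    rw [Prod.mk.injEq]
    exact ⟨ea, eh⟩
  have hmem : (z, z - 1) ∈ prs c B := ⟨hz, hz1, (fb_pred hl hex hJ).1, by omega⟩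
  calc msr c B' = (φ '' (prs c B')).ncard := (Set.ncard_image_of_injOn hinj).symm
    _ ≤ (prs c B \ {(z, z - 1)}).ncard := Set.ncard_le_ncard himg hfin.diff
    _ < (prs c B).ncard := Set.ncard_diff_singleton_lt_of_mem hmem hfin
    _ = msr c B := rfl

/-- Existence of a terminal chain, by induction on the measure. -/
lemma exists_chain (m : ℕ) : ∀ (rho : PartitionSeq),
    msr c (Set.range (rho.beta 0)) ≤ m →
    ∃ (k : ℕ) (seq : ℕ → PartitionSeq), seq 0 = rho ∧
      (∀ j < k, RemoveStep l (JT l c) (seq j) (seq (j + 1))) ∧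
      ¬ ∃ ab : ℕ × ℕ, IsSetRemovable l (JT l c) (seq k) ab := by
  induction m with
  | zero =>
    intro rho hm
    refine ⟨0, fun _ => rho, rfl, by omega, ?_⟩
    intro hab
    obtain ⟨z, hz, hz1, hJ⟩ := (exists_setRemovable_iff hl c rho).mp hab
    have := msr_pos hl hex (prs_finite_of_beta c rho) hz hz1 hJ
    omega
  | succ m ih =>
    intro rho hm
    by_cases hab : ∃ ab : ℕ × ℕ, IsSetRemovable l (JT l c) rho ab
    · obtain ⟨z, hz, hz1, hJ⟩ := (exists_setRemovable_iff hl c rho).mp hab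
      obtain ⟨mu, hstep, hrange⟩ := exists_removeStep hl c rho z hz hz1 hJ
      have hlt : msr c (Set.range (mu.beta 0)) < msr c (Set.range (rho.beta 0)) := by
        rw [hrange]
        exact msr_lt hl hex (prs_finite_of_beta c rho) hz hz1 hJ
      obtain ⟨k, seq, h0, hsteps, hterm⟩ := ih mu (by omega)
      refine ⟨k + 1, fun j => if j = 0 then rho else seq (j - 1), by simp, ?_, ?_⟩
      · intro j hj
        rcases Nat.eq_zero_or_pos j with rfl | hjpos
        · simpa [h0] using hstep
        · have h1 : j ≠ 0 := by omega
          have h2 : j + 1 ≠ 0 := by omega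
          simp only [h1, h2, if_false]
          have : j - 1 + 1 = j + 1 - 1 := by omega
          rw [← this]
          exact hsteps (j - 1) (by omega)
      · have h2 : k + 1 ≠ 0 := by omega
        simpa only [h2, if_false, Nat.add_sub_cancel] using hterm
    · exact ⟨0, fun _ => rho, rfl, by omega, hab⟩

end AuxMeasure
section AuxPsum

variable {l : ℕ}

lemma psum_add (c : Fin l → ℕ) {p p' : Fin l} (h : p ≤ p') :
    psum c p' = psum c p + ∑ j ∈ Finset.Ioc p p', c j := by
  rw [psum, psum, ← Finset.sum_union]
  · congr 1
    ext j
    simp only [Finset.mem_union, Finset.mem_Iic, Finset.mem_Ioc]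
    constructor
    · intro hj
      rcases le_or_gt j p with h1 | h1
      · exact Or.inl h1
      · exact Or.inr ⟨h1, hj⟩
    · rintro (h1 | ⟨-, h2⟩)
      · exact le_trans h1 h
      · exact h2
  · rw [Finset.disjoint_left]
    intro j hj1 hj2
    simp only [Finset.mem_Iic] at hj1
    simp only [Finset.mem_Ioc] at hj2
    exact absurd hj1 (not_le.mpr hj2.1)

lemma psum_total (c : Fin l → ℕ) (p : Fin l) :
    psum c p + ∑ j ∈ Finset.Ioi p, c j = ∑ j, c j := by
  rw [psum, ← Finset.sum_union]
  · congr 1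
    ext j
    simp only [Finset.mem_union, Finset.mem_Iic, Finset.mem_Ioi, Finset.mem_univ, iff_true]
    exact le_or_gt j p
  · rw [Finset.disjoint_left]
    intro j hj1 hj2
    simp only [Finset.mem_Iic] at hj1
    simp only [Finset.mem_Ioi] at hj2
    exact absurd hj1 (not_le.mpr hj2)

lemma psum_le_total (c : Fin l → ℕ) (p : Fin l) : psum c p ≤ ∑ j, c j := by
  have := psum_total c p
  omega

lemma psum_pos (c : Fin l → ℕ) {q : Fin l} (h : c q ≠ 0) : 1 ≤ psum c q := by
  have : c q ≤ psum c q :=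
    Finset.single_le_sum (fun i _ => Nat.zero_le _) (Finset.mem_Iic.mpr le_rfl)
  omega

lemma psum_eq_iff_zero (c : Fin l → ℕ) {p p' : Fin l} (h : p ≤ p') :
    psum c p' = psum c p ↔ ∀ j, p < j → j ≤ p' → c j = 0 := by
  rw [psum_add c h]
  constructor
  · intro heq j hj1 hj2
    have hz : ∑ j ∈ Finset.Ioc p p', c j = 0 := by omega
    exact Finset.sum_eq_zero_iff.mp hz j (Finset.mem_Ioc.mpr ⟨hj1, hj2⟩)
  · intro hz
    rw [Finset.sum_eq_zero (fun j hj => hz j (Finset.mem_Ioc.mp hj).1 (Finset.mem_Ioc.mp hj).2)]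
    omega

lemma psum_eq_total_iff (c : Fin l → ℕ) (q : Fin l) :
    psum c q = ∑ j, c j ↔ ∀ j, q < j → c j = 0 := by
  have htot := psum_total c q
  constructor
  · intro heq j hj
    have hz : ∑ j ∈ Finset.Ioi q, c j = 0 := by omega
    exact Finset.sum_eq_zero_iff.mp hz j (Finset.mem_Ioi.mpr hj)
  · intro hz
    rw [← htot, Finset.sum_eq_zero (fun j hj => hz j (Finset.mem_Ioi.mp hj))]
    omega

lemma psum_eq_zero_iff (c : Fin l → ℕ) (p : Fin l) :
    psum c p = 0 ↔ ∀ j, j ≤ p → c j = 0 := by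
  rw [psum, Finset.sum_eq_zero_iff]
  constructor
  · intro h j hj; exact h j (Finset.mem_Iic.mpr hj)
  · intro h j hj; exact h j (Finset.mem_Iic.mp hj)

end AuxPsum
section AuxChiEval

variable {l : ℕ} (hl : 0 < l) {c : Fin l → ℕ} (hex : ∃ q, c q ≠ 0)
include hl hex

lemma fb_eval {x yv : ℤ} {q : Fin l} (hx : ¬ Jres c (x - 1))
    (hrep : x - 1 = (l : ℤ) * (yv - 1) + ((q : ℕ) : ℤ)) (p : Fin l) (v : ℤ) :
    fb c ((l : ℤ) * (v - 1) + ((p : ℕ) : ℤ) + 1) = x ↔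
      ((psum c p = psum c q ∧ v = yv) ∨
       (psum c q = ∑ j, c j ∧ psum c p = 0 ∧ v = yv + 1)) := by
  have hl' : (0 : ℤ) < l := by exact_mod_cast hl
  have hcq : c q ≠ 0 := by
    intro hc0
    exact hx ((jres_of_rep hl c (x - 1) q (yv - 1) hrep).mpr hc0)
  have hpl : ((p : ℕ) : ℤ) < l := by exact_mod_cast p.isLt
  have hql : ((q : ℕ) : ℤ) < l := by exact_mod_cast q.isLt
  have hp0 : (0 : ℤ) ≤ ((p : ℕ) : ℤ) := by positivity
  have hq0 : (0 : ℤ) ≤ ((q : ℕ) : ℤ) := by positivity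
  have hx' : x = (l : ℤ) * (yv - 1) + ((q : ℕ) : ℤ) + 1 := by omega
  have hA : (l : ℤ) * yv = (l : ℤ) * (yv - 1) + l := by ring
  set z : ℤ := (l : ℤ) * (v - 1) + ((p : ℕ) : ℤ) + 1 with hzdef
  have hzx : z - x = (l : ℤ) * (v - yv) + ((p : ℕ) : ℤ) - ((q : ℕ) : ℤ) := by
    rw [hzdef, hx']; ring
  constructor
  · intro hfb
    have hxle : x ≤ z := hfb ▸ fb_le hl hex z
    have hzlt : z - (l : ℤ) < x := hfb ▸ fb_gt hl hex z
    have hJall : ∀ w, x < w → w ≤ z → Jres c (w - 1) := fun w h1 h2 =>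
      jres_of_between hl hex (show fb c z < w from hfb ▸ h1) h2
    have hk01 : v - yv = 0 ∨ v - yv = 1 := by
      rcases le_or_gt (v - yv) (-1) with h1 | h1
      · have := mul_le_mul_of_nonneg_left h1 hl'.le
        omega
      rcases le_or_gt 2 (v - yv) with h2 | h2
      · have := mul_le_mul_of_nonneg_left h2 hl'.le
        omega
      · omega
    rcases hk01 with hk | hk
    · -- v = yv, fiber stays at the same level
      have hv : v = yv := by omega
      have hm0 : (l : ℤ) * (v - yv) = 0 := by rw [hk]; ring
      left
      refine ⟨?_, hv⟩
      have hqp : q ≤ p := by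
        rw [Fin.le_def]
        omega
      rw [psum_eq_iff_zero c hqp]
      intro j hj1 hj2
      have hjq : ((q : ℕ) : ℤ) < ((j : ℕ) : ℤ) := by exact_mod_cast Fin.lt_def.mp hj1
      have hjp : ((j : ℕ) : ℤ) ≤ ((p : ℕ) : ℤ) := by exact_mod_cast Fin.le_def.mp hj2
      have hw := hJall (x + ((j : ℕ) : ℤ) - ((q : ℕ) : ℤ)) (by omega) (by omega)
      exact (jres_of_rep hl c _ j (yv - 1) (by omega)).mp hw
    · -- v = yv + 1, the fiber wraps around
      have hv : v = yv + 1 := by omega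
      have hm1 : (l : ℤ) * (v - yv) = l := by rw [hk]; ring
      right
      have hpq : p < q := by
        rw [Fin.lt_def]
        omega
      refine ⟨?_, ?_, hv⟩
      · rw [psum_eq_total_iff]
        intro j hj1
        have hjq : ((q : ℕ) : ℤ) < ((j : ℕ) : ℤ) := by exact_mod_cast Fin.lt_def.mp hj1
        have hjl : ((j : ℕ) : ℤ) < l := by exact_mod_cast j.isLt
        have hw := hJall (x + ((j : ℕ) : ℤ) - ((q : ℕ) : ℤ)) (by omega) (by omega)
        exact (jres_of_rep hl c _ j (yv - 1) (by omega)).mp hw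
      · rw [psum_eq_zero_iff]
        intro j hj1
        have hjp : ((j : ℕ) : ℤ) ≤ ((p : ℕ) : ℤ) := by exact_mod_cast Fin.le_def.mp hj1
        have hj0 : (0 : ℤ) ≤ ((j : ℕ) : ℤ) := by positivity
        have hw := hJall (x + (l : ℤ) + ((j : ℕ) : ℤ) - ((q : ℕ) : ℤ)) (by omega) (by omega)
        exact (jres_of_rep hl c _ j yv (by omega)).mp hw
  · rintro (⟨hps, hv⟩ | ⟨htot, hzero, hv⟩)
    · -- same level
      have hm0 : (l : ℤ) * (v - yv) = 0 := by rw [hv]; ring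
      have hqp : q ≤ p := by
        by_contra hcon
        have hpq : p < q := not_le.mp hcon
        exact hcq ((psum_eq_iff_zero c hpq.le).mp hps.symm q hpq le_rfl)
      have hzeros := (psum_eq_iff_zero c hqp).mp hps
      have hqpv : ((q : ℕ) : ℤ) ≤ ((p : ℕ) : ℤ) := by exact_mod_cast Fin.le_def.mp hqp
      rw [fb_eq_iff hl hex]
      refine ⟨by omega, hx, ?_⟩
      intro w hw1 hw2
      set s : ℤ := w - x with hs
      have hs1 : 1 ≤ s := by omega
      have hs2 : s ≤ ((p : ℕ) : ℤ) - ((q : ℕ) : ℤ) := by omega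
      have hjlt : (q : ℕ) + s.toNat < l := by omega
      set j : Fin l := ⟨(q : ℕ) + s.toNat, hjlt⟩ with hj
      have hjcast : ((j : ℕ) : ℤ) = ((q : ℕ) : ℤ) + s := by
        simp only [hj]
        push_cast
        omega
      have hcj : c j = 0 := by
        refine hzeros j (Fin.lt_def.mpr (by omega)) (Fin.le_def.mpr ?_)
        omega
      exact (jres_of_rep hl c (w - 1) j (yv - 1) (by omega)).mpr hcj
    · -- wrapped level
      have hm1 : (l : ℤ) * (v - yv) = l := by rw [hv]; ring
      have hztot := (psum_eq_total_iff c q).mp htot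
      have hzzero := (psum_eq_zero_iff c p).mp hzero
      have hpq : p < q := by
        by_contra hcon
        exact hcq (hzzero q (not_lt.mp hcon))
      have hpqv : ((p : ℕ) : ℤ) < ((q : ℕ) : ℤ) := by exact_mod_cast Fin.lt_def.mp hpq
      rw [fb_eq_iff hl hex]
      refine ⟨by omega, hx, ?_⟩
      intro w hw1 hw2
      set s : ℤ := w - x with hs
      have hs1 : 1 ≤ s := by omega
      have hs2 : s ≤ (l : ℤ) + ((p : ℕ) : ℤ) - ((q : ℕ) : ℤ) := by omega
      rcases le_or_gt ((q : ℕ) + s.toNat) (l - 1) with hcase | hcase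
      · have hjlt : (q : ℕ) + s.toNat < l := by omega
        set j : Fin l := ⟨(q : ℕ) + s.toNat, hjlt⟩ with hj
        have hjcast : ((j : ℕ) : ℤ) = ((q : ℕ) : ℤ) + s := by
          simp only [hj]; push_cast; omega
        have hcj : c j = 0 := hztot j (Fin.lt_def.mpr (by omega))
        exact (jres_of_rep hl c (w - 1) j (yv - 1) (by omega)).mpr hcj
      · have hjlt : (q : ℕ) + s.toNat - l < l := by omega
        set j : Fin l := ⟨(q : ℕ) + s.toNat - l, hjlt⟩ with hj
        have hjcast : ((j : ℕ) : ℤ) = ((q : ℕ) : ℤ) + s - l := by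
          simp only [hj]; push_cast; omega
        have hcj : c j = 0 := by
          refine hzzero j (Fin.le_def.mpr ?_)
          omega
        exact (jres_of_rep hl c (w - 1) j yv (by omega)).mpr hcj

end AuxChiEval
section AuxChiCnt

variable {l : ℕ}

/-- the enumeration map of `chiSet`. -/
def eMap (l : ℕ) (D : Fin l → ℕ → ℤ) : Fin l × ℕ → ℤ := fun pi =>
  (l : ℤ) * (D pi.1 pi.2 - 1) + ((pi.1 : ℕ) : ℤ) + 1

lemma chi_eq_range (D : Fin l → ℕ → ℤ) : chiSet l D = Set.range (eMap l D) := by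
  ext z
  simp only [chiSet, Set.mem_setOf_eq, Set.mem_range, eMap, Prod.exists]
  constructor
  · rintro ⟨q, i, rfl⟩; exact ⟨q, i, rfl⟩
  · rintro ⟨q, i, rfl⟩; exact ⟨q, i, rfl⟩

lemma eMap_inj (hl : 0 < l) (D : Fin l → ℕ → ℤ) (hD : ∀ p, StrictAnti (D p)) :
    Function.Injective (eMap l D) := by
  rintro ⟨p, i⟩ ⟨p', i'⟩ h
  simp only [eMap] at h
  have h1 := int_rep hl (eMap l D (p, i) - 1) p (D p i - 1) (by simp [eMap])
  have h2 := int_rep hl (eMap l D (p', i') - 1) p' (D p' i' - 1) (by simp [eMap])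
  have heq : eMap l D (p, i) = eMap l D (p', i') := by simpa [eMap] using h
  rw [heq] at h1
  have hpp : p = p' := Fin.ext (by exact_mod_cast h1.1.symm.trans h2.1)
  subst hpp
  have hD' : D p i = D p i' := by omega
  have : i = i' := (hD p).injective hD'
  simp [this]

variable (hl : 0 < l) {c : Fin l → ℕ} (hex : ∃ q, c q ≠ 0)
include hl hex

/-- Master counting lemma: the number of elements of `χ(D)` in the block with
bottom `x` is a `multAt` value whose index depends only on `x`. -/
lemma cnt_chi (d : ℕ) (hsum : ∑ j, c j = d) (D : Fin l → ℕ → ℤ)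
    (hD : ∀ p, StrictAnti (D p)) {x yv : ℤ} {q : Fin l} (hx : ¬ Jres c (x - 1))
    (hrep : x - 1 = (l : ℤ) * (yv - 1) + ((q : ℕ) : ℤ)) :
    cnt c (chiSet l D) x = multAt d c D (psum c q) yv := by
  have hcq : c q ≠ 0 := by
    intro hc0
    exact hx ((jres_of_rep hl c (x - 1) q (yv - 1) hrep).mpr hc0)
  have ht1 : 1 ≤ psum c q := psum_pos c hcq
  -- identify the intersection with an image
  have hfib : chiSet l D ∩ {z : ℤ | fb c z = x} =
      eMap l D '' (eMap l D ⁻¹' {z : ℤ | fb c z = x}) := by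
    rw [Set.image_preimage_eq_inter_range, Set.inter_comm, chi_eq_range]
  have hpre : eMap l D ⁻¹' {z : ℤ | fb c z = x} =
      {pi : Fin l × ℕ | (psum c pi.1 = psum c q ∧ D pi.1 pi.2 = yv) ∨
        (psum c q = ∑ j, c j ∧ psum c pi.1 = 0 ∧ D pi.1 pi.2 = yv + 1)} := by
    ext ⟨p, i⟩
    simp only [Set.mem_preimage, Set.mem_setOf_eq, eMap]
    exact fb_eval hl hex hx hrep p (D p i)
  have hfin : (eMap l D ⁻¹' {z : ℤ | fb c z = x}).Finite :=
    Set.Finite.preimage (Set.injOn_of_injective (eMap_inj hl D hD))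
      (fiber_finite hl hex x)
  have hcnt : cnt c (chiSet l D) x = (eMap l D ⁻¹' {z : ℤ | fb c z = x}).ncard := by
    rw [cnt, hfib, Set.ncard_image_of_injOn (Set.injOn_of_injective (eMap_inj hl D hD))]
  rw [hcnt, hpre]
  by_cases hqd : psum c q = d
  · -- wrap case: t = d
    have hsplit : {pi : Fin l × ℕ | (psum c pi.1 = psum c q ∧ D pi.1 pi.2 = yv) ∨
          (psum c q = ∑ j, c j ∧ psum c pi.1 = 0 ∧ D pi.1 pi.2 = yv + 1)} =
        {pi : Fin l × ℕ | psum c pi.1 = 0 ∧ D pi.1 pi.2 - 1 = yv} ∪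
        {pi : Fin l × ℕ | psum c pi.1 = d ∧ D pi.1 pi.2 = yv} := by
      ext ⟨p, i⟩
      simp only [Set.mem_setOf_eq, Set.mem_union]
      constructor
      · rintro (⟨h1, h2⟩ | ⟨-, h2, h3⟩)
        · exact Or.inr ⟨by omega, h2⟩
        · exact Or.inl ⟨h2, by omega⟩
      · rintro (⟨h1, h2⟩ | ⟨h1, h2⟩)
        · exact Or.inr ⟨by omega, h1, by omega⟩
        · exact Or.inl ⟨by omega, h2⟩
    rw [hsplit]
    have hdisj : Disjoint {pi : Fin l × ℕ | psum c pi.1 = 0 ∧ D pi.1 pi.2 - 1 = yv}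
        {pi : Fin l × ℕ | psum c pi.1 = d ∧ D pi.1 pi.2 = yv} := by
      rw [Set.disjoint_left]
      rintro pi ⟨h1, -⟩ ⟨h2, -⟩
      omega
    have hfin' := hfin
    rw [hpre, hsplit] at hfin'
    have hfin1 := hfin'.subset Set.subset_union_left
    have hfin2 := hfin'.subset Set.subset_union_right
    rw [Set.ncard_union_eq hdisj hfin1 hfin2]
    unfold multAt
    rw [if_pos (Or.inr hqd)]
    rw [← Nat.card_coe_set_eq, ← Nat.card_coe_set_eq]
    rfl
  · -- middle case
    have hmid : {pi : Fin l × ℕ | (psum c pi.1 = psum c q ∧ D pi.1 pi.2 = yv) ∨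
          (psum c q = ∑ j, c j ∧ psum c pi.1 = 0 ∧ D pi.1 pi.2 = yv + 1)} =
        {pi : Fin l × ℕ | psum c pi.1 = psum c q ∧ D pi.1 pi.2 = yv} := by
      ext ⟨p, i⟩
      simp only [Set.mem_setOf_eq]
      constructor
      · rintro (h | ⟨h1, -⟩)
        · exact h
        · exact absurd (hsum ▸ h1) hqd
      · exact Or.inl
    rw [hmid]
    unfold multAt
    rw [if_neg (show ¬(psum c q = 0 ∨ psum c q = d) by omega), ← Nat.card_coe_set_eq]
    rfl

/-- `χ(C̃)` is terminal when `C̃` is admissible. -/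
lemma chi_terminal (Ct : Fin l → ℕ → ℤ)
    (h3 : ∀ p : Fin l, c p = 0 → (p : ℕ) ≠ 0 →
      ∀ i : ℕ, ∃ i' : ℕ,
        Ct ⟨(p : ℕ) - 1, lt_of_le_of_lt (Nat.sub_le _ _) p.isLt⟩ i' = Ct p i)
    (h4 : ∀ h0 : 0 < l, c ⟨0, h0⟩ = 0 →
      ∀ i : ℕ, ∃ i' : ℕ, Ct ⟨l - 1, Nat.sub_lt h0 Nat.one_pos⟩ i' = Ct ⟨0, h0⟩ i - 1) :
    TerminalSet c (chiSet l Ct) := by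
  rintro z ⟨p, i, rfl⟩ hJ
  set v := Ct p i with hv
  have hzrep : (l : ℤ) * (v - 1) + ((p : ℕ) : ℤ) + 1 - 1 = (l : ℤ) * (v - 1) + ((p : ℕ) : ℤ) := by
    ring
  have hcp : c p = 0 := by
    rw [hzrep] at hJ
    exact (jres_of_rep hl c _ p (v - 1) rfl).mp hJ
  by_cases hp0 : (p : ℕ) = 0
  · -- wrap: use condition (iv)
    have hpeq : p = ⟨0, hl⟩ := Fin.ext hp0
    obtain ⟨i', hi'⟩ := h4 hl (hpeq ▸ hcp) i
    refine ⟨⟨l - 1, Nat.sub_lt hl Nat.one_pos⟩, i', ?_⟩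
    have hlcast : (((l - 1 : ℕ) : ℕ) : ℤ) = (l : ℤ) - 1 := by
      have : 1 ≤ l := hl
      push_cast [this]
      ring
    have hival : Ct ⟨l - 1, Nat.sub_lt hl Nat.one_pos⟩ i' = v - 1 := by
      rw [hi', ← hpeq, ← hv]
    rw [hival]
    simp only [hlcast, hp0]
    push_cast
    ring
  · -- use condition (iii)
    obtain ⟨i', hi'⟩ := h3 p hcp hp0 i
    refine ⟨⟨(p : ℕ) - 1, lt_of_le_of_lt (Nat.sub_le _ _) p.isLt⟩, i', ?_⟩
    rw [hi', ← hv]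
    have hcast : (((p : ℕ) - 1 : ℕ) : ℤ) = ((p : ℕ) : ℤ) - 1 := by
      have : 1 ≤ (p : ℕ) := by omega
      push_cast [this]
      ring
    rw [hcast]
    ring

end AuxChiCnt
/-- with `C = C(λ)`, `C̃` an admissible tuple for `C`, `ν` the partition
with `β(ν)` enumerating `χ(C)` and `μ` the partition with `β(μ)` enumerating `χ(C̃)`:
there is a finite sequence of deletions of `J`-removable nodes from `ν` terminating in a
partition without `J`-removable nodes, and every such sequence terminates in `μ`. -/
theorem statement1 (l n d : ℕ) (hl : 1 ≤ l) (hd : 1 ≤ d)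
    (c : Fin l → ℕ) (hc : ∑ j, c j = d)
    (r : Fin l → ℤ) (hr : ∑ j, r j = 0)
    (w : Equiv.Perm (Fin l))
    (Λ : Fin l → PartitionSeq) (hΛ : ∑ p, (Λ p).size = n)
    (Ct : Fin l → ℕ → ℤ)
    (hCt : IsAdmissible d c (fun p => (Λ (w⁻¹ p)).beta (r p)) Ct)
    (ν μ : PartitionSeq)
    (hν : Set.range (ν.beta 0) = chiSet l (fun p => (Λ (w⁻¹ p)).beta (r p)))
    (hμ : Set.range (μ.beta 0) = chiSet l Ct) :
    (∃ (k : ℕ) (seq : ℕ → PartitionSeq), seq 0 = ν ∧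
        (∀ j < k, RemoveStep l {j : ℕ | ∃ hj : j < l, c ⟨j, hj⟩ = 0} (seq j) (seq (j + 1))) ∧
        ¬ ∃ ab : ℕ × ℕ,
            IsSetRemovable l {j : ℕ | ∃ hj : j < l, c ⟨j, hj⟩ = 0} (seq k) ab) ∧
    (∀ (k : ℕ) (seq : ℕ → PartitionSeq), seq 0 = ν →
        (∀ j < k, RemoveStep l {j : ℕ | ∃ hj : j < l, c ⟨j, hj⟩ = 0} (seq j) (seq (j + 1))) →
        (¬ ∃ ab : ℕ × ℕ,
            IsSetRemovable l {j : ℕ | ∃ hj : j < l, c ⟨j, hj⟩ = 0} (seq k) ab) →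
        seq k = μ) := by
  have hl0 : 0 < l := hl
  have hex : ∃ q : Fin l, c q ≠ 0 := by
    by_contra hcon
    push_neg at hcon
    rw [Finset.sum_eq_zero (fun j _ => hcon j)] at hc
    omega
  obtain ⟨hCt1, hCt2, hCt3, hCt4⟩ := hCt
  have hCs : ∀ p : Fin l, StrictAnti ((Λ (w⁻¹ p)).beta (r p)) :=
    fun p => (Λ (w⁻¹ p)).beta_strictAnti (r p)
  -- the block counts of the two chi sets agree
  have hcnt_eq : ∀ x : ℤ, cnt c (chiSet l Ct) x =
      cnt c (chiSet l (fun p => (Λ (w⁻¹ p)).beta (r p))) x := by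
    intro x
    by_cases hx : Jres c (x - 1)
    · rw [cnt_empty_of_jres hl0 hex hx, cnt_empty_of_jres hl0 hex hx]
    · obtain ⟨q, m, hrep0⟩ := exists_rep hl0 (x - 1)
      have hrep : x - 1 = (l : ℤ) * ((m + 1) - 1) + ((q : ℕ) : ℤ) := by
        rw [hrep0]; ring_nf
      rw [cnt_chi hl0 hex d hc Ct hCt1 hx hrep,
        cnt_chi hl0 hex d hc (fun p => (Λ (w⁻¹ p)).beta (r p)) hCs hx hrep]
      exact hCt2 (psum c q) (hc ▸ psum_le_total c q) (m + 1)
  have hterm_mu : TerminalSet c (chiSet l Ct) := chi_terminal hl0 hex Ct hCt3 hCt4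
  constructor
  · exact exists_chain hl0 hex (msr c (Set.range (ν.beta 0))) ν le_rfl
  · intro k seq h0 hsteps hterm
    have hinv : ∀ j, j ≤ k → ∀ x : ℤ, cnt c (Set.range ((seq j).beta 0)) x =
        cnt c (chiSet l (fun p => (Λ (w⁻¹ p)).beta (r p))) x := by
      intro j
      induction j with
      | zero => intro _ x; rw [h0, hν]
      | succ n ih =>
        intro hn x
        obtain ⟨z, hz, hz1, hJ, hr⟩ := removeStep_move hl0 c (hsteps n (by omega))
        rw [hr, cnt_move hl0 hex hz hz1 hJ x, ih (by omega) x]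
    have hTk : TerminalSet c (Set.range ((seq k).beta 0)) := by
      intro z hz hJ
      by_contra hc1
      exact hterm ((exists_setRemovable_iff hl0 c (seq k)).mpr ⟨z, hz, hc1, hJ⟩)
    have hend : Set.range ((seq k).beta 0) = Set.range (μ.beta 0) := by
      rw [hμ]
      refine terminal_eq hl0 hex hTk hterm_mu ?_
      intro x
      rw [hinv k le_rfl x, hcnt_eq x]
    exact PartitionSeq.eq_of_beta_range_eq hend
end

section
/- Fix integers l ≥ 1, d ≥ 1 and a tuple c = (c_0,…,c_{l−1}) of nonnegative integers with c_0+…+c_{l−1} = d; set J = {j ∈ {0,…,l−1} : c_j = 0}. Let C̃ = (C̃^0,…,C̃^{l−1}) be a tuple of strictly decreasing sequences of integers such that each C̃^p stabilises with respect to some integer ρ_p with ρ_0+…+ρ_{l−1} = 0, and such that: (iii) for every p ∈ J with p ≠ 0, every term of C̃^p is also a term of C̃^{p−1}; and (iv) if 0 ∈ J, then for every term z of C̃^0, z − 1 is a term of C̃^{l−1}. Let μ be the unique partition whose β-number β(μ) enumerates χ(C̃) in decreasing order. Then μ has no J-removable node. -/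
/-- if `C̃` is a tuple of strictly decreasing integer sequences stabilising
with respect to integers `ρ_p` summing to `0`, satisfying conditions (iii) and (iv), and
`μ` is the partition whose `β`-number enumerates `χ(C̃)`, then `μ` has no `J`-removable
node, where `J = {j : c_j = 0}`. -/
theorem statement2 (l d : ℕ) (hl : 1 ≤ l) (hd : 1 ≤ d)
    (c : Fin l → ℕ) (hc : ∑ j, c j = d)
    (Ct : Fin l → ℕ → ℤ) (ρ : Fin l → ℤ) (hρ : ∑ p, ρ p = 0)
    (hdec : ∀ p, StrictAnti (Ct p))
    (hstab : ∀ p, Stabilises (Ct p) (ρ p))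
    (hiii : ∀ p : Fin l, c p = 0 → (p : ℕ) ≠ 0 →
        ∀ i : ℕ, ∃ i' : ℕ,
          Ct ⟨(p : ℕ) - 1, lt_of_le_of_lt (Nat.sub_le _ _) p.isLt⟩ i' = Ct p i)
    (hiv : ∀ h0 : 0 < l, c ⟨0, h0⟩ = 0 →
        ∀ i : ℕ, ∃ i' : ℕ, Ct ⟨l - 1, by omega⟩ i' = Ct ⟨0, h0⟩ i - 1)
    (μ : PartitionSeq) (hμ : Set.range (μ.beta 0) = chiSet l Ct) :
    ¬ ∃ ab : ℕ × ℕ, IsSetRemovable l {j : ℕ | ∃ hj : j < l, c ⟨j, hj⟩ = 0} μ ab := by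
  rintro ⟨⟨a, b⟩, j, ⟨hjl, hcj⟩, ⟨⟨hab, mu', hmu'⟩, hcong⟩⟩
  -- β is strictly decreasing
  have hβanti : StrictAnti (μ.beta 0) := by
    apply strictAnti_nat_of_succ_lt
    intro n
    have := μ.antitone (by omega : n ≤ n + 1)
    unfold PartitionSeq.beta
    push_cast
    omega
  have hab' : b < μ.part a := hab
  -- the removed node is at the end of its row
  have hb1 : b + 1 = μ.part a := by
    by_contra h
    have h2 : b + 1 < μ.part a := by omega
    have hmem : ((a, b+1) : ℕ × ℕ) ∈ YoungSet mu' := by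
      rw [← hmu']
      exact ⟨h2, by simp⟩
    have : ((a, b) : ℕ × ℕ) ∈ YoungSet mu' := by
      have : b + 1 < mu'.part a := hmem
      exact show b < mu'.part a by omega
    rw [← hmu'] at this
    exact this.2 rfl
  have hnext : μ.part (a + 1) ≤ b := by
    by_contra h
    have h2 : b < μ.part (a + 1) := by omega
    have hmem : ((a + 1, b) : ℕ × ℕ) ∈ YoungSet mu' := by
      rw [← hmu']
      exact ⟨h2, by simp⟩
    have h3 : b < mu'.part (a + 1) := hmem
    have h4 : mu'.part (a + 1) ≤ mu'.part a := mu'.antitone (Nat.le_succ a)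
    have : ((a, b) : ℕ × ℕ) ∈ YoungSet mu' := show b < mu'.part a by omega
    rw [← hmu'] at this
    exact this.2 rfl
  -- β(a) is in χ(Ct)
  have hxin : μ.beta 0 a ∈ chiSet l Ct := by rw [← hμ]; exact ⟨a, rfl⟩
  obtain ⟨q, i, hqi⟩ := hxin
  have hbetaa : μ.beta 0 a = (b : ℤ) + 1 - a := by
    unfold PartitionSeq.beta; push_cast; omega
  -- q = j
  have hql := q.isLt
  have hA : (l : ℤ) ∣ ((b : ℤ) - a) - ((q : ℕ) : ℤ) := ⟨Ct q i - 1, by omega⟩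
  have hB : (l : ℤ) ∣ ((j : ℤ)) - ((b : ℤ) - a) := Int.ModEq.dvd hcong
  obtain ⟨k1, hk1⟩ := hA
  obtain ⟨k2, hk2⟩ := hB
  have hdvd : (l : ℤ) ∣ ((q : ℕ) : ℤ) - (j : ℤ) :=
    ⟨-(k1 + k2), by linear_combination -hk1 - hk2⟩
  have hq_eq_j : (q : ℕ) = j := by
    have h0 := Int.eq_zero_of_abs_lt_dvd hdvd (by rw [abs_lt]; omega)
    omega
  -- β(a) - 1 is also in χ(Ct)
  have hx1in : μ.beta 0 a - 1 ∈ chiSet l Ct := by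
    by_cases hq0 : (q : ℕ) = 0
    · have h0 : 0 < l := hl
      have hqeq : q = ⟨0, h0⟩ := Fin.ext hq0
      have hc0 : c ⟨0, h0⟩ = 0 := by
        rw [← hqeq]
        have : c q = c ⟨j, hjl⟩ := by congr 1; exact Fin.ext hq_eq_j
        rw [this]; exact hcj
      obtain ⟨i', hi'⟩ := hiv h0 hc0 i
      refine ⟨⟨l - 1, by omega⟩, i', ?_⟩
      rw [hqi, hqeq, hi']
      have hcast : ((l - 1 : ℕ) : ℤ) = (l : ℤ) - 1 := by omega
      simp only [Fin.val_mk, hcast, Nat.cast_zero]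
      ring
    · have hcq : c q = 0 := by
        have : c q = c ⟨j, hjl⟩ := by congr 1; exact Fin.ext hq_eq_j
        rw [this]; exact hcj
      obtain ⟨i', hi'⟩ := hiii q hcq hq0 i
      refine ⟨⟨(q : ℕ) - 1, lt_of_le_of_lt (Nat.sub_le _ _) q.isLt⟩, i', ?_⟩
      rw [hi', hqi]
      have : (((q : ℕ) - 1 : ℕ) : ℤ) = ((q : ℕ) : ℤ) - 1 := by omega
      rw [this]; ring
  rw [← hμ] at hx1in
  obtain ⟨i0, hi0⟩ := hx1in
  -- contradiction
  have hlt : a < i0 := by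
    by_contra h
    have := hβanti.antitone (by omega : i0 ≤ a)
    omega
  have h5 : μ.beta 0 i0 ≤ μ.beta 0 (a + 1) := hβanti.antitone (by omega)
  have h6 : μ.beta 0 (a + 1) ≤ (b : ℤ) - a - 1 := by
    unfold PartitionSeq.beta
    push_cast
    omega
  omega
end

section
/- Fix integers l ≥ 1, n ≥ 0, d ≥ 1, a tuple c = (c_0,…,c_{l−1}) of nonnegative integers with c_0+…+c_{l−1} = d, a tuple r = (r_0,…,r_{l−1}) of integers with r_0+…+r_{l−1} = 0, and a permutation w of {0,…,l−1}; set m_p = c_0+…+c_p, J = {j : c_j = 0}, and I_t = {p : m_p = t} for 0 ≤ t ≤ d. For an l-multipartition λ of n let C(λ)^p = β^{r_p}(λ^{(w^{−1}(p))}), and let C̃(λ) denote the unique admissible tuple for C(λ). Then for any two l-multipartitions λ, μ of n: χ(C̃(λ)) = χ(C̃(μ)) (equivalently, the partitions whose β-numbers enumerate χ(C̃(λ)) and χ(C̃(μ)), i.e. the J-hearts of λ and μ, coincide) if and only if C(λ)_{[t]} = C(μ)_{[t]} as multisets for all 0 ≤ t ≤ d. -/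
section Aux
open Classical
variable {l : ℕ}

lemma psum_mono (c : Fin l → ℕ) : Monotone (psum c) := fun _ _ h =>
  Finset.sum_le_sum_of_subset (Finset.Iic_subset_Iic.mpr h)

lemma psum_last (c : Fin l → ℕ) (h0 : 0 < l) :
    psum c ⟨l - 1, Nat.sub_lt h0 Nat.one_pos⟩ = ∑ j, c j := by
  unfold psum
  congr 1
  ext j
  simp only [Finset.mem_Iic, Finset.mem_univ, iff_true, Fin.le_def]
  omega

lemma psum_zero (c : Fin l → ℕ) (h0 : 0 < l) : psum c ⟨0, h0⟩ = c ⟨0, h0⟩ := by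
  unfold psum
  rw [show Finset.Iic (⟨0, h0⟩ : Fin l) = {⟨0, h0⟩} from by
    ext j; simp [Fin.le_def, Fin.ext_iff], Finset.sum_singleton]

lemma psum_succ (c : Fin l → ℕ) (p : Fin l) (hp : (p : ℕ) ≠ 0) :
    psum c p = psum c ⟨(p : ℕ) - 1, lt_of_le_of_lt (Nat.sub_le _ _) p.isLt⟩ + c p := by
  unfold psum
  rw [show Finset.Iic p = insert p (Finset.Iic (⟨(p : ℕ) - 1, lt_of_le_of_lt (Nat.sub_le _ _) p.isLt⟩ : Fin l)) from by
    ext j; simp only [Finset.mem_Iic, Finset.mem_insert, Fin.le_def, Fin.ext_iff]; omega]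
  rw [Finset.sum_insert (by simp [Fin.le_def]; omega)]
  ring

lemma range_nested (c : Fin l → ℕ) (Ct : Fin l → ℕ → ℤ)
    (hiii : ∀ p : Fin l, c p = 0 → (p : ℕ) ≠ 0 →
      ∀ i : ℕ, ∃ i' : ℕ,
        Ct ⟨(p : ℕ) - 1, lt_of_le_of_lt (Nat.sub_le _ _) p.isLt⟩ i' = Ct p i) :
    ∀ k : ℕ, ∀ p p' : Fin l, (p : ℕ) = (p' : ℕ) + k → psum c p' = psum c p →
      Set.range (Ct p) ⊆ Set.range (Ct p') := by
  intro k
  induction k with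
  | zero => intro p p' h _; rw [show p' = p from Fin.ext (by omega)]
  | succ k ih =>
    intro p p' h hps
    have hp0 : (p : ℕ) ≠ 0 := by omega
    set pm : Fin l := ⟨(p : ℕ) - 1, lt_of_le_of_lt (Nat.sub_le _ _) p.isLt⟩ with hpm
    have hpmval : (pm : ℕ) = (p : ℕ) - 1 := rfl
    have h1 : p' ≤ pm := by rw [Fin.le_def, hpmval]; omega
    have h2 : pm ≤ p := by rw [Fin.le_def, hpmval]; omega
    have hpmps : psum c p' = psum c pm := le_antisymm (psum_mono c h1)
      (hps ▸ psum_mono c h2)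
    have hc0 : c p = 0 := by
      have := psum_succ c p hp0
      rw [← hpm] at this
      omega
    have step : Set.range (Ct p) ⊆ Set.range (Ct pm) := by
      rintro z ⟨i, rfl⟩
      obtain ⟨i', hi'⟩ := hiii p hc0 hp0 i
      exact ⟨i', hi'⟩
    exact step.trans (ih pm p' (by rw [hpmval]; omega) hpmps)

lemma range_nested' (c : Fin l → ℕ) (Ct : Fin l → ℕ → ℤ)
    (hiii : ∀ p : Fin l, c p = 0 → (p : ℕ) ≠ 0 →
      ∀ i : ℕ, ∃ i' : ℕ,
        Ct ⟨(p : ℕ) - 1, lt_of_le_of_lt (Nat.sub_le _ _) p.isLt⟩ i' = Ct p i)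
    (p' p : Fin l) (hle : p' ≤ p) (hps : psum c p' = psum c p) :
    Set.range (Ct p) ⊆ Set.range (Ct p') :=
  range_nested c Ct hiii ((p : ℕ) - (p' : ℕ)) p p'
    (by rw [Fin.le_def] at hle; omega) hps

lemma chain_finset_eq {β : Type*} (R : β → β → Prop) (S T : Finset β)
    (hR : ∀ a ∈ S, ∀ b ∈ T, R a b ∨ R b a)
    (hS : ∀ a b, R a b → b ∈ S → a ∈ S)
    (hT : ∀ a b, R a b → b ∈ T → a ∈ T)
    (hcard : S.card = T.card) : S = T := by
  by_cases h : S ⊆ T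
  · exact Finset.eq_of_subset_of_card_le h hcard.ge
  · obtain ⟨a, haS, haT⟩ := Finset.not_subset.mp h
    have hTS : T ⊆ S := fun b hb => by
      rcases hR a haS b hb with h1 | h1
      · exact absurd (hT a b h1 hb) haT
      · exact hS b a h1 haS
    exact (Finset.eq_of_subset_of_card_le hTS hcard.le).symm

lemma natCard_eq (Ct : Fin l → ℕ → ℤ) (hCt : ∀ p, Function.Injective (Ct p))
    (P : Fin l → Prop) (z : ℤ)
    [DecidablePred fun p => P p ∧ z ∈ Set.range (Ct p)] :
    Nat.card {pi : Fin l × ℕ // P pi.1 ∧ Ct pi.1 pi.2 = z} =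
      (Finset.univ.filter (fun p => P p ∧ z ∈ Set.range (Ct p))).card := by
  have e : {pi : Fin l × ℕ // P pi.1 ∧ Ct pi.1 pi.2 = z} ≃
      {p : Fin l // P p ∧ z ∈ Set.range (Ct p)} :=
    { toFun := fun x => ⟨x.1.1, x.2.1, ⟨x.1.2, x.2.2⟩⟩
      invFun := fun x => ⟨(x.1, x.2.2.choose), x.2.1, x.2.2.choose_spec⟩
      left_inv := fun x => by
        obtain ⟨⟨p, i⟩, hP, hz⟩ := x
        exact Subtype.ext (Prod.ext_iff.mpr ⟨rfl,
          hCt p ((Exists.choose_spec (⟨i, hz⟩ : ∃ j, Ct p j = z)).trans hz.symm)⟩)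
      right_inv := fun x => rfl }
  rw [Nat.card_congr e, Nat.card_eq_fintype_card, Fintype.card_subtype]

lemma multAt_mid_s3 (d : ℕ) (c : Fin l → ℕ) (Ct : Fin l → ℕ → ℤ)
    (hCt : ∀ p, Function.Injective (Ct p)) (t : ℕ) (ht : ¬(t = 0 ∨ t = d)) (z : ℤ)
    [DecidablePred fun p => psum c p = t ∧ z ∈ Set.range (Ct p)] :
    multAt d c Ct t z =
      (Finset.univ.filter (fun p => psum c p = t ∧ z ∈ Set.range (Ct p))).card := by
  rw [multAt, if_neg ht]
  exact natCard_eq Ct hCt (fun p => psum c p = t) z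

lemma multAt_ext (d : ℕ) (c : Fin l → ℕ) (Ct : Fin l → ℕ → ℤ)
    (hCt : ∀ p, Function.Injective (Ct p)) (t : ℕ) (ht : t = 0 ∨ t = d) (z : ℤ)
    [DecidablePred fun p => psum c p = 0 ∧ (z + 1) ∈ Set.range (Ct p)]
    [DecidablePred fun p => psum c p = d ∧ z ∈ Set.range (Ct p)] :
    multAt d c Ct t z =
      (Finset.univ.filter (fun p => psum c p = 0 ∧ (z + 1) ∈ Set.range (Ct p))).card +
      (Finset.univ.filter (fun p => psum c p = d ∧ z ∈ Set.range (Ct p))).card := by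
  rw [multAt, if_pos ht]
  congr 1
  · rw [Nat.card_congr (Equiv.subtypeEquivRight (q := fun pi : Fin l × ℕ =>
      psum c pi.1 = 0 ∧ Ct pi.1 pi.2 = z + 1) (fun pi => by
        constructor <;> rintro ⟨h1, h2⟩ <;> exact ⟨h1, by omega⟩))]
    exact natCard_eq Ct hCt (fun p => psum c p = 0) (z + 1)
  · exact natCard_eq Ct hCt (fun p => psum c p = d) z

noncomputable def bSet (c : Fin l → ℕ) (d : ℕ) (Ct : Fin l → ℕ → ℤ) (z : ℤ) :
    Finset (Fin l × Bool) :=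
  (Finset.univ.filter (fun q => psum c q = 0 ∧ (z + 1) ∈ Set.range (Ct q))).image
      (fun q => (q, true)) ∪
  (Finset.univ.filter (fun q => psum c q = d ∧ z ∈ Set.range (Ct q))).image
      (fun q => (q, false))

lemma mem_bSet {c : Fin l → ℕ} {d : ℕ} {Ct : Fin l → ℕ → ℤ} {z : ℤ}
    {pb : Fin l × Bool} :
    pb ∈ bSet c d Ct z ↔
      ((pb.2 = true ∧ psum c pb.1 = 0 ∧ (z + 1) ∈ Set.range (Ct pb.1)) ∨
       (pb.2 = false ∧ psum c pb.1 = d ∧ z ∈ Set.range (Ct pb.1))) := by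
  obtain ⟨q, b⟩ := pb
  cases b <;>
    simp [bSet, Prod.ext_iff, eq_comm, and_comm, and_assoc]

lemma card_bSet {c : Fin l → ℕ} {d : ℕ} {Ct : Fin l → ℕ → ℤ} {z : ℤ}
    (hCt : ∀ p, Function.Injective (Ct p)) :
    (bSet c d Ct z).card = multAt d c Ct 0 z := by
  rw [multAt_ext d c Ct hCt 0 (Or.inl rfl) z, bSet, Finset.card_union_of_disjoint
    (by simp [Finset.disjoint_left]),
    Finset.card_image_of_injective _ (fun a b h => (Prod.ext_iff.mp h).1),
    Finset.card_image_of_injective _ (fun a b h => (Prod.ext_iff.mp h).1)]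

/-- The chain order on the boundary index pairs. -/
def bRel (c : Fin l → ℕ) (d : ℕ) (a b : Fin l × Bool) : Prop :=
  psum c a.1 = (if a.2 then 0 else d) ∧ psum c b.1 = (if b.2 then 0 else d) ∧
  ((a.2 = b.2 ∧ a.1 ≤ b.1) ∨ (a.2 = false ∧ b.2 = true))

lemma bSet_lower {c : Fin l → ℕ} {d : ℕ} (h0 : 0 < l) (hc : ∑ j, c j = d)
    {Ct : Fin l → ℕ → ℤ} {z : ℤ}
    (h3 : ∀ p : Fin l, c p = 0 → (p : ℕ) ≠ 0 →
      ∀ i : ℕ, ∃ i' : ℕ,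
        Ct ⟨(p : ℕ) - 1, lt_of_le_of_lt (Nat.sub_le _ _) p.isLt⟩ i' = Ct p i)
    (h4 : ∀ h0 : 0 < l, c ⟨0, h0⟩ = 0 →
      ∀ i : ℕ, ∃ i' : ℕ, Ct ⟨l - 1, Nat.sub_lt h0 Nat.one_pos⟩ i' = Ct ⟨0, h0⟩ i - 1) :
    ∀ a b, bRel c d a b → b ∈ bSet c d Ct z → a ∈ bSet c d Ct z := by
  have hlast : psum c ⟨l - 1, Nat.sub_lt h0 Nat.one_pos⟩ = d := by
    rw [psum_last c h0, hc]
  rintro a b ⟨hia, hib, hor⟩ hb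
  rw [mem_bSet] at hb ⊢
  rcases hor with ⟨heq, hle⟩ | ⟨haf, hbt⟩
  · rcases hb with ⟨hbt, hb0, hbz⟩ | ⟨hbf, hbd, hbz⟩
    · have hat : a.2 = true := heq.trans hbt
      rw [hat] at hia; simp only [if_true] at hia
      exact Or.inl ⟨hat, hia,
        range_nested' c Ct h3 a.1 b.1 hle (hia.trans hb0.symm) hbz⟩
    · have hat : a.2 = false := heq.trans hbf
      rw [hat] at hia; simp only [Bool.false_eq_true, if_false] at hia
      exact Or.inr ⟨hat, hia,
        range_nested' c Ct h3 a.1 b.1 hle (hia.trans hbd.symm) hbz⟩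
  · rcases hb with ⟨_, hb0, hbz⟩ | ⟨hbf, _, _⟩
    · rw [haf] at hia; simp only [Bool.false_eq_true, if_false] at hia
      have hz0le : (⟨0, h0⟩ : Fin l) ≤ b.1 := by rw [Fin.le_def]; exact Nat.zero_le _
      have hps0 : psum c ⟨0, h0⟩ = 0 :=
        Nat.le_zero.mp (le_trans (psum_mono c hz0le) hb0.le)
      obtain ⟨i, hi⟩ :=
        range_nested' c Ct h3 ⟨0, h0⟩ b.1 hz0le (hps0.trans hb0.symm) hbz
      have hc0 : c ⟨0, h0⟩ = 0 := by rw [← psum_zero c h0]; exact hps0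
      obtain ⟨i', hi'⟩ := h4 h0 hc0 i
      have hzl : z ∈ Set.range (Ct ⟨l - 1, Nat.sub_lt h0 Nat.one_pos⟩) :=
        ⟨i', by rw [hi', hi]; ring⟩
      have hled : a.1 ≤ ⟨l - 1, Nat.sub_lt h0 Nat.one_pos⟩ := by
        rw [Fin.le_def]
        show (a.1 : ℕ) ≤ l - 1
        have := a.1.isLt
        omega
      exact Or.inr ⟨haf, hia,
        range_nested' c Ct h3 a.1 _ hled (hia.trans hlast.symm) hzl⟩
    · rw [hbt] at hbf; exact absurd hbf (by simp)

lemma ranges_eq (h0 : 0 < l) (d : ℕ) (hd : 1 ≤ d) (c : Fin l → ℕ)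
    (hc : ∑ j, c j = d) (CtL CtM : Fin l → ℕ → ℤ)
    (hL1 : ∀ p, StrictAnti (CtL p)) (hM1 : ∀ p, StrictAnti (CtM p))
    (hL3 : ∀ p : Fin l, c p = 0 → (p : ℕ) ≠ 0 → ∀ i : ℕ, ∃ i' : ℕ,
      CtL ⟨(p : ℕ) - 1, lt_of_le_of_lt (Nat.sub_le _ _) p.isLt⟩ i' = CtL p i)
    (hM3 : ∀ p : Fin l, c p = 0 → (p : ℕ) ≠ 0 → ∀ i : ℕ, ∃ i' : ℕ,
      CtM ⟨(p : ℕ) - 1, lt_of_le_of_lt (Nat.sub_le _ _) p.isLt⟩ i' = CtM p i)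
    (hL4 : ∀ h0 : 0 < l, c ⟨0, h0⟩ = 0 → ∀ i : ℕ, ∃ i' : ℕ,
      CtL ⟨l - 1, Nat.sub_lt h0 Nat.one_pos⟩ i' = CtL ⟨0, h0⟩ i - 1)
    (hM4 : ∀ h0 : 0 < l, c ⟨0, h0⟩ = 0 → ∀ i : ℕ, ∃ i' : ℕ,
      CtM ⟨l - 1, Nat.sub_lt h0 Nat.one_pos⟩ i' = CtM ⟨0, h0⟩ i - 1)
    (hmult : ∀ t ≤ d, ∀ z : ℤ, multAt d c CtL t z = multAt d c CtM t z) :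
    ∀ p, Set.range (CtL p) = Set.range (CtM p) := by
  have hlast : psum c ⟨l - 1, Nat.sub_lt h0 Nat.one_pos⟩ = d := by
    rw [psum_last c h0, hc]
  have hptop : ∀ p : Fin l, psum c p ≤ d := fun p => by
    rw [← hlast]
    apply psum_mono
    rw [Fin.le_def]
    show (p : ℕ) ≤ l - 1
    have := p.isLt
    omega
  intro p
  by_cases hcase : psum c p = 0 ∨ psum c p = d
  · -- boundary case
    have hbeq : ∀ z : ℤ, bSet c d CtL z = bSet c d CtM z := by
      intro z
      apply chain_finset_eq (bRel c d)
      · intro a ha b hb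
        have hia : psum c a.1 = (if a.2 then 0 else d) := by
          rcases mem_bSet.mp ha with ⟨h1, h2, _⟩ | ⟨h1, h2, _⟩ <;> rw [h1] <;> simpa
        have hib : psum c b.1 = (if b.2 then 0 else d) := by
          rcases mem_bSet.mp hb with ⟨h1, h2, _⟩ | ⟨h1, h2, _⟩ <;> rw [h1] <;> simpa
        rcases Bool.eq_false_or_eq_true a.2 with ha2 | ha2 <;>
          rcases Bool.eq_false_or_eq_true b.2 with hb2 | hb2
        · rcases le_total a.1 b.1 with h | h
          · exact Or.inl ⟨hia, hib, Or.inl ⟨ha2.trans hb2.symm, h⟩⟩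
          · exact Or.inr ⟨hib, hia, Or.inl ⟨hb2.trans ha2.symm, h⟩⟩
        · exact Or.inr ⟨hib, hia, Or.inr ⟨hb2, ha2⟩⟩
        · exact Or.inl ⟨hia, hib, Or.inr ⟨ha2, hb2⟩⟩
        · rcases le_total a.1 b.1 with h | h
          · exact Or.inl ⟨hia, hib, Or.inl ⟨ha2.trans hb2.symm, h⟩⟩
          · exact Or.inr ⟨hib, hia, Or.inl ⟨hb2.trans ha2.symm, h⟩⟩
      · exact bSet_lower h0 hc hL3 hL4
      · exact bSet_lower h0 hc hM3 hM4
      · rw [card_bSet (fun q => (hL1 q).injective),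
          card_bSet (fun q => (hM1 q).injective)]
        exact hmult 0 (Nat.zero_le d) z
    rcases hcase with ht0 | htd
    · ext x
      constructor <;> intro hx
      · have h1 : ((p, true) : Fin l × Bool) ∈ bSet c d CtL (x - 1) :=
          mem_bSet.mpr (Or.inl ⟨rfl, ht0, by simpa using hx⟩)
        rw [hbeq (x - 1)] at h1
        rcases mem_bSet.mp h1 with ⟨_, _, h2⟩ | ⟨h2, _, _⟩
        · simpa using h2
        · simp at h2
      · have h1 : ((p, true) : Fin l × Bool) ∈ bSet c d CtM (x - 1) :=
          mem_bSet.mpr (Or.inl ⟨rfl, ht0, by simpa using hx⟩)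
        rw [← hbeq (x - 1)] at h1
        rcases mem_bSet.mp h1 with ⟨_, _, h2⟩ | ⟨h2, _, _⟩
        · simpa using h2
        · simp at h2
    · ext x
      constructor <;> intro hx
      · have h1 : ((p, false) : Fin l × Bool) ∈ bSet c d CtL x :=
          mem_bSet.mpr (Or.inr ⟨rfl, htd, hx⟩)
        rw [hbeq x] at h1
        rcases mem_bSet.mp h1 with ⟨h2, _, _⟩ | ⟨_, _, h2⟩
        · simp at h2
        · exact h2
      · have h1 : ((p, false) : Fin l × Bool) ∈ bSet c d CtM x :=
          mem_bSet.mpr (Or.inr ⟨rfl, htd, hx⟩)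
        rw [← hbeq x] at h1
        rcases mem_bSet.mp h1 with ⟨h2, _, _⟩ | ⟨_, _, h2⟩
        · simp at h2
        · exact h2
  · -- middle case
    set t := psum c p with hts
    have hSeq : ∀ z : ℤ,
        (Finset.univ.filter (fun q => psum c q = t ∧ z ∈ Set.range (CtL q))) =
        (Finset.univ.filter (fun q => psum c q = t ∧ z ∈ Set.range (CtM q))) := by
      intro z
      apply chain_finset_eq (fun a b : Fin l => psum c a = t ∧ psum c b = t ∧ a ≤ b)
      · intro a ha b hb
        rw [Finset.mem_filter] at ha hb
        rcases le_total a b with h | h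
        · exact Or.inl ⟨ha.2.1, hb.2.1, h⟩
        · exact Or.inr ⟨hb.2.1, ha.2.1, h⟩
      · rintro a b ⟨ha, hb, hab⟩ hbm
        rw [Finset.mem_filter] at hbm ⊢
        exact ⟨Finset.mem_univ a, ha,
          range_nested' c CtL hL3 a b hab (ha.trans hb.symm) hbm.2.2⟩
      · rintro a b ⟨ha, hb, hab⟩ hbm
        rw [Finset.mem_filter] at hbm ⊢
        exact ⟨Finset.mem_univ a, ha,
          range_nested' c CtM hM3 a b hab (ha.trans hb.symm) hbm.2.2⟩
      · rw [← multAt_mid_s3 d c CtL (fun q => (hL1 q).injective) t hcase z,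
          ← multAt_mid_s3 d c CtM (fun q => (hM1 q).injective) t hcase z]
        exact hmult t (hptop p) z
    ext x
    constructor <;> intro hx
    · have h1 : p ∈ Finset.univ.filter
          (fun q => psum c q = t ∧ x ∈ Set.range (CtL q)) :=
        Finset.mem_filter.mpr ⟨Finset.mem_univ p, rfl, hx⟩
      rw [hSeq x] at h1
      exact (Finset.mem_filter.mp h1).2.2
    · have h1 : p ∈ Finset.univ.filter
          (fun q => psum c q = t ∧ x ∈ Set.range (CtM q)) :=
        Finset.mem_filter.mpr ⟨Finset.mem_univ p, rfl, hx⟩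
      rw [← hSeq x] at h1
      exact (Finset.mem_filter.mp h1).2.2

lemma multAt_congr (d : ℕ) (c : Fin l → ℕ) (C D : Fin l → ℕ → ℤ)
    (hC : ∀ p, Function.Injective (C p)) (hD : ∀ p, Function.Injective (D p))
    (hrange : ∀ p, Set.range (C p) = Set.range (D p)) (t : ℕ) (z : ℤ) :
    multAt d c C t z = multAt d c D t z := by
  by_cases ht : t = 0 ∨ t = d
  · rw [multAt_ext d c C hC t ht z, multAt_ext d c D hD t ht z]
    simp_rw [hrange]
  · rw [multAt_mid_s3 d c C hC t ht z, multAt_mid_s3 d c D hD t ht z]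
    simp_rw [hrange]

lemma chiSet_eq_of_range {C D : Fin l → ℕ → ℤ}
    (h : ∀ q, Set.range (C q) = Set.range (D q)) : chiSet l C = chiSet l D := by
  ext z
  constructor <;> rintro ⟨q, i, rfl⟩
  · obtain ⟨i', hi'⟩ : C q i ∈ Set.range (D q) := (h q) ▸ Set.mem_range_self i
    exact ⟨q, i', by rw [hi']⟩
  · obtain ⟨i', hi'⟩ : D q i ∈ Set.range (C q) := (h q).symm ▸ Set.mem_range_self i
    exact ⟨q, i', by rw [hi']⟩

lemma range_sub_of_chiSet {C D : Fin l → ℕ → ℤ} (h : chiSet l C ⊆ chiSet l D) :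
    ∀ q, Set.range (C q) ⊆ Set.range (D q) := by
  intro q x hx
  obtain ⟨i, rfl⟩ := hx
  obtain ⟨q2, i2, he⟩ := h (⟨q, i, rfl⟩ : _ ∈ chiSet l C)
  have hl0 : 0 < l := q.pos
  have hdvd : (l : ℤ) ∣ ((q2 : ℤ) - (q : ℤ)) := ⟨C q i - D q2 i2, by linarith⟩
  have hq : (q2 : ℤ) - (q : ℤ) = 0 := by
    refine Int.eq_zero_of_abs_lt_dvd hdvd ?_
    have h1 : (q : ℕ) < l := q.isLt
    have h2 : (q2 : ℕ) < l := q2.isLt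
    rw [abs_lt]
    omega
  have hq2 : q2 = q := Fin.ext (by omega)
  subst hq2
  have h3 : (l : ℤ) * (C q2 i - 1) = (l : ℤ) * (D q2 i2 - 1) := by linarith
  have h4 := mul_left_cancel₀ (by exact_mod_cast hl0.ne' : (l : ℤ) ≠ 0) h3
  exact ⟨i2, by linarith⟩

end Aux

/-- for two `l`-multipartitions `λ, μ` of `n` with admissible tuples
`C̃(λ)`, `C̃(μ)` for `C(λ)`, `C(μ)`: `χ(C̃(λ)) = χ(C̃(μ))` (i.e. the `J`-hearts coincide)
iff `C(λ)_{[t]} = C(μ)_{[t]}` as multisets for all `0 ≤ t ≤ d`. -/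
theorem statement3 (l n d : ℕ) (hl : 1 ≤ l) (hd : 1 ≤ d)
    (c : Fin l → ℕ) (hc : ∑ j, c j = d)
    (r : Fin l → ℤ) (hr : ∑ j, r j = 0)
    (w : Equiv.Perm (Fin l))
    (Λ M : Fin l → PartitionSeq)
    (hΛ : ∑ p, (Λ p).size = n) (hM : ∑ p, (M p).size = n)
    (CtΛ CtM : Fin l → ℕ → ℤ)
    (hCtΛ : IsAdmissible d c (fun p => (Λ (w⁻¹ p)).beta (r p)) CtΛ)
    (hCtM : IsAdmissible d c (fun p => (M (w⁻¹ p)).beta (r p)) CtM) :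
    chiSet l CtΛ = chiSet l CtM ↔
      ∀ t ≤ d, ∀ z : ℤ,
        multAt d c (fun p => (Λ (w⁻¹ p)).beta (r p)) t z =
          multAt d c (fun p => (M (w⁻¹ p)).beta (r p)) t z := by
  obtain ⟨hL1, hL2, hL3, hL4⟩ := hCtΛ
  obtain ⟨hM1, hM2, hM3, hM4⟩ := hCtM
  have h0 : 0 < l := hl
  constructor
  · intro hchi t ht z
    have hrg : ∀ p, Set.range (CtΛ p) = Set.range (CtM p) := fun p =>
      Set.Subset.antisymm (range_sub_of_chiSet hchi.le p)
        (range_sub_of_chiSet hchi.ge p)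
    calc multAt d c (fun p => (Λ (w⁻¹ p)).beta (r p)) t z
        = multAt d c CtΛ t z := (hL2 t ht z).symm
      _ = multAt d c CtM t z := multAt_congr d c CtΛ CtM
          (fun p => (hL1 p).injective) (fun p => (hM1 p).injective) hrg t z
      _ = multAt d c (fun p => (M (w⁻¹ p)).beta (r p)) t z := hM2 t ht z
  · intro hm
    have hmult : ∀ t ≤ d, ∀ z : ℤ, multAt d c CtΛ t z = multAt d c CtM t z :=
      fun t ht z => (hL2 t ht z).trans ((hm t ht z).trans (hM2 t ht z).symm)
    exact chiSet_eq_of_range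
      (ranges_eq h0 d hd c hc CtΛ CtM hL1 hM1 hL3 hM3 hL4 hM4 hmult)
end

section
/- Fix integers l ≥ 1, d ≥ 1 and a tuple c = (c_0,…,c_{l−1}) of nonnegative integers with c_0+…+c_{l−1} = d; set m_p = c_0+…+c_p, J = {j : c_j = 0}, and I_t = {p : m_p = t} for 0 ≤ t ≤ d. Let C = (C^0,…,C^{l−1}) be an l-tuple of strictly decreasing sequences of integers such that C^p stabilises with respect to some integer r_p, for each p. Then there exists a tuple C̃ = (C̃^0,…,C̃^{l−1}) that is admissible for C. -/
open Finset

/-- Enumerate a set of integers that is bounded above and contains all small integers. -/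
lemma exists_enum (S : Set ℤ) (hM : ∃ M, ∀ z ∈ S, z ≤ M)
    (hB : ∃ B, ∀ z ≤ B, z ∈ S) :
    ∃ e : ℕ → ℤ, StrictAnti e ∧ Set.range e = S := by
  classical
  obtain ⟨M, hM⟩ := hM
  obtain ⟨B, hB⟩ := hB
  obtain ⟨top, htopS, htop⟩ := Int.exists_greatest_of_bdd (P := fun z => z ∈ S)
      ⟨M, hM⟩ ⟨B, hB B le_rfl⟩
  have hgex : ∀ x : ℤ, ∃ y, (y ∈ S ∧ y < x) ∧ ∀ z, (z ∈ S ∧ z < x) → z ≤ y := by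
    intro x
    apply Int.exists_greatest_of_bdd (P := fun z => z ∈ S ∧ z < x)
    · exact ⟨x, fun z hz => le_of_lt hz.2⟩
    · exact ⟨min B (x - 1), hB _ (min_le_left _ _), lt_of_le_of_lt (min_le_right _ _) (by omega)⟩
  choose g hg1 hg2 using hgex
  set e : ℕ → ℤ := fun n => g^[n] top with he
  have he0 : e 0 = top := rfl
  have hesucc : ∀ n, e (n + 1) = g (e n) := fun n => Function.iterate_succ_apply' g n top
  have heS : ∀ n, e n ∈ S := by
    intro n; induction n with
    | zero => exact htopS
    | succ n _ => rw [hesucc]; exact (hg1 (e n)).1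
  have helt : ∀ n, e (n + 1) < e n := fun n => by rw [hesucc]; exact (hg1 (e n)).2
  have hanti : StrictAnti e := strictAnti_nat_of_succ_lt helt
  refine ⟨e, hanti, ?_⟩
  apply Set.eq_of_subset_of_subset
  · rintro z ⟨n, rfl⟩; exact heS n
  · intro z hz
    have hle : ∀ n, e n ≤ top - n := by
      intro n; induction n with
      | zero => simp [he0]
      | succ n ih => have := helt n; push_cast; omega
    have hex : ∃ n, e n ≤ z := by
      refine ⟨(top - z).toNat, ?_⟩
      have h1 := hle (top - z).toNat
      have h2 : z ≤ top := htop z hz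
      omega
    have hn := Nat.find_spec hex
    set n := Nat.find hex with hndef
    match hn2 : n, hn with
    | 0, hn => exact ⟨0, le_antisymm (hn2 ▸ hn) (htop z hz)⟩
    | (n' + 1), hn =>
      have hmin : ¬ e n' ≤ z := Nat.find_min hex (by omega)
      have : z ≤ e (n' + 1) := by
        rw [hesucc]; exact hg2 (e n') z ⟨hz, by omega⟩
      exact ⟨n' + 1, le_antisymm (by omega) this⟩

/-- Counting pairs for a strictly decreasing family. -/
lemma cnt_eq {l : ℕ} (P : Fin l → Prop) (C : Fin l → ℕ → ℤ)
    (h : ∀ p, StrictAnti (C p)) (z : ℤ) :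
    Nat.card {pi : Fin l × ℕ // P pi.1 ∧ C pi.1 pi.2 = z}
      = Nat.card {p : Fin l // P p ∧ z ∈ Set.range (C p)} := by
  apply Nat.card_congr
  refine ⟨fun x => ⟨x.1.1, x.2.1, ⟨x.1.2, x.2.2⟩⟩,
    fun y => ⟨(y.1, Classical.choose y.2.2), y.2.1, Classical.choose_spec y.2.2⟩, ?_, ?_⟩
  · rintro ⟨⟨p, i⟩, hP, hCi⟩
    have hch : C p (Classical.choose (⟨i, hCi⟩ : z ∈ Set.range (C p))) = z :=
      Classical.choose_spec (⟨i, hCi⟩ : z ∈ Set.range (C p))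
    have : Classical.choose (⟨i, hCi⟩ : z ∈ Set.range (C p)) = i :=
      (h p).injective (hch.trans hCi.symm)
    exact Subtype.ext (Prod.ext rfl this)
  · rintro ⟨p, hP, hz⟩; rfl

lemma card_sub {l : ℕ} (Q : Fin l → Prop) [DecidablePred Q] :
    Nat.card {p : Fin l // Q p} = (Finset.univ.filter Q).card := by
  simp [Nat.card_eq_fintype_card, Fintype.card_subtype]

lemma pos_mono {l : ℕ} (blkf ordf : Fin l → ℕ) {p q : Fin l} (hb : blkf p = blkf q)
    (ho : ordf p < ordf q) :
    (univ.filter (fun r => blkf r = blkf p ∧ ordf r < ordf p)).card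
      < (univ.filter (fun r => blkf r = blkf q ∧ ordf r < ordf q)).card := by
  apply Finset.card_lt_card
  rw [Finset.ssubset_iff_of_subset (by
    intro r hr; simp only [mem_filter, mem_univ, true_and] at hr ⊢
    exact ⟨hr.1.trans hb, hr.2.trans ho⟩)]
  exact ⟨p, by simp [hb, ho], by simp⟩

lemma pos_lt_block {l : ℕ} (blkf ordf : Fin l → ℕ) (p : Fin l) :
    (univ.filter (fun q => blkf q = blkf p ∧ ordf q < ordf p)).card
      < (univ.filter (fun q => blkf q = blkf p)).card := by
  apply Finset.card_lt_card
  rw [Finset.ssubset_iff_of_subset (by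
    intro r hr; simp only [mem_filter, mem_univ, true_and] at hr ⊢; exact hr.1)]
  exact ⟨p, by simp, by simp⟩

lemma block_count {l : ℕ} (blkf ordf : Fin l → ℕ) (hord : Function.Injective ordf)
    (t m : ℕ) (hm : m ≤ (univ.filter (fun p => blkf p = t)).card) :
    (univ.filter (fun p => blkf p = t ∧
        (univ.filter (fun q => blkf q = blkf p ∧ ordf q < ordf p)).card < m)).card = m := by
  classical
  set posf : Fin l → ℕ := fun p => (univ.filter (fun q => blkf q = blkf p ∧ ordf q < ordf p)).card
    with hposf
  set Bset := univ.filter (fun p => blkf p = t) with hBset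
  set n := Bset.card with hn
  have hinj : Set.InjOn posf Bset := by
    intro p hp q hq hpq
    by_contra hne
    have hbpq : blkf p = blkf q := by
      simp only [hBset, Finset.mem_coe, mem_filter] at hp hq; rw [hp.2, hq.2]
    rcases lt_or_gt_of_ne (fun h => hne (hord h)) with h | h
    · exact absurd hpq (ne_of_lt (pos_mono blkf ordf hbpq h))
    · exact absurd hpq.symm (ne_of_lt (pos_mono blkf ordf hbpq.symm h))
  have hbound : ∀ p ∈ Bset, posf p < n := by
    intro p hp
    have := pos_lt_block blkf ordf p
    have hbp : blkf p = t := by simpa [hBset] using hp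
    calc posf p < (univ.filter (fun q => blkf q = blkf p)).card := this
      _ = n := by rw [hn, hBset]; congr 1; ext q; simp [hbp]
  have himg : Bset.image posf = Finset.range n := by
    apply Finset.eq_of_subset_of_card_le
    · intro j hj
      simp only [mem_image] at hj
      obtain ⟨p, hp, rfl⟩ := hj
      simpa using hbound p hp
    · rw [Finset.card_range, Finset.card_image_of_injOn hinj]
  have hkey : univ.filter (fun p => blkf p = t ∧ posf p < m) = Bset.filter (fun p => posf p < m) := by
    rw [hBset, Finset.filter_filter]
  rw [hkey]
  have : (Bset.filter (fun p => posf p < m)).card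
      = ((Bset.filter (fun p => posf p < m)).image posf).card := by
    rw [Finset.card_image_of_injOn (hinj.mono (Finset.coe_subset.mpr (Finset.filter_subset _ _)))]
  rw [this]
  have himg2 : (Bset.filter (fun p => posf p < m)).image posf
      = (Finset.range n).filter (fun j => j < m) := by
    rw [← himg]
    ext j
    simp only [mem_image, mem_filter]
    constructor
    · rintro ⟨p, ⟨hp, hm'⟩, rfl⟩; exact ⟨⟨p, hp, rfl⟩, hm'⟩
    · rintro ⟨⟨p, hp, rfl⟩, hj⟩; exact ⟨p, ⟨hp, hj⟩, rfl⟩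
  rw [himg2]
  have : (Finset.range n).filter (fun j => j < m) = Finset.range m := by
    ext j; simp only [mem_filter, mem_range]; omega
  rw [this, Finset.card_range]

lemma ncard_congr {l : ℕ} (P Q : Fin l → Prop) (h : ∀ p, P p ↔ Q p) :
    Nat.card {p : Fin l // P p} = Nat.card {p : Fin l // Q p} := by
  have : P = Q := funext fun p => propext (h p)
  rw [this]

lemma ncard_mono {l : ℕ} (P Q : Fin l → Prop) (h : ∀ p, P p → Q p) :
    Nat.card {p : Fin l // P p} ≤ Nat.card {p : Fin l // Q p} := by
  classical
  rw [card_sub P, card_sub Q]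
  apply Finset.card_le_card
  intro p hp
  simp only [mem_filter, mem_univ, true_and] at hp ⊢
  exact h p hp

lemma ncard_union {l : ℕ} (P Q : Fin l → Prop) (h : ∀ p, ¬ (P p ∧ Q p)) :
    Nat.card {p : Fin l // P p} + Nat.card {p : Fin l // Q p}
      = Nat.card {p : Fin l // P p ∨ Q p} := by
  classical
  rw [card_sub P, card_sub Q, card_sub (fun p => P p ∨ Q p)]
  rw [← Finset.card_union_of_disjoint]
  · congr 1
    ext p
    simp only [mem_union, mem_filter, mem_univ, true_and]
  · rw [Finset.disjoint_left]
    intro p hp hq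
    simp only [mem_filter, mem_univ, true_and] at hp hq
    exact h p ⟨hp, hq⟩

lemma pos_mono' {l : ℕ} (blkf ordf : Fin l → ℕ) {p q : Fin l} (hb : blkf p = blkf q)
    (ho : ordf p < ordf q) :
    Nat.card {r : Fin l // blkf r = blkf p ∧ ordf r < ordf p}
      < Nat.card {r : Fin l // blkf r = blkf q ∧ ordf r < ordf q} := by
  classical
  rw [card_sub, card_sub]
  exact pos_mono blkf ordf hb ho

lemma pos_lt_block' {l : ℕ} (blkf ordf : Fin l → ℕ) (p : Fin l) :
    Nat.card {q : Fin l // blkf q = blkf p ∧ ordf q < ordf p}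
      < Nat.card {q : Fin l // blkf q = blkf p} := by
  classical
  rw [card_sub, card_sub]
  exact pos_lt_block blkf ordf p

lemma block_count' {l : ℕ} (blkf ordf : Fin l → ℕ) (hord : Function.Injective ordf)
    (t m : ℕ) (hm : m ≤ Nat.card {p : Fin l // blkf p = t}) :
    Nat.card {p : Fin l // blkf p = t ∧
        Nat.card {q : Fin l // blkf q = blkf p ∧ ordf q < ordf p} < m} = m := by
  classical
  rw [card_sub] at hm
  rw [card_sub]
  have hpt : ∀ p : Fin l, Nat.card {q : Fin l // blkf q = blkf p ∧ ordf q < ordf p}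
      = (univ.filter (fun q => blkf q = blkf p ∧ ordf q < ordf p)).card :=
    fun p => card_sub _
  have : (univ.filter (fun p => blkf p = t ∧
        Nat.card {q : Fin l // blkf q = blkf p ∧ ordf q < ordf p} < m))
      = (univ.filter (fun p => blkf p = t ∧
        (univ.filter (fun q => blkf q = blkf p ∧ ordf q < ordf p)).card < m)) :=
    Finset.filter_congr (fun p _ => by rw [hpt p])
  rw [this]
  exact block_count blkf ordf hord t m hm


/-- for any `l`-tuple `C` of strictly decreasing integer sequences, each
stabilising with respect to some integer, there exists an admissible tuple for `C`. -/
theorem statement4 (l d : ℕ) (hl : 1 ≤ l) (hd : 1 ≤ d)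
    (c : Fin l → ℕ) (hc : ∑ j, c j = d)
    (C : Fin l → ℕ → ℤ)
    (hdec : ∀ p, StrictAnti (C p))
    (hstab : ∀ p, ∃ rp : ℤ, Stabilises (C p) rp) :
    ∃ Ct : Fin l → ℕ → ℤ, IsAdmissible d c C Ct := by
  classical
  have hl0 : 0 < l := hl
  have hne : (Finset.univ : Finset (Fin l)).Nonempty := ⟨⟨0, hl0⟩, mem_univ _⟩
  choose r hr using hstab
  choose K hK using hr
  set sh : Fin l → ℤ := fun p => if psum c p = 0 then 1 else 0 with hsh
  set D : Fin l → ℕ → ℤ := fun p i => C p i - sh p with hD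
  set blkf : Fin l → ℕ := fun p => if psum c p = 0 then d else psum c p with hblk
  set ordf : Fin l → ℕ := fun p => if psum c p = 0 then l + (p : ℕ) else (p : ℕ) with hordf
  have hordinj : Function.Injective ordf := by
    intro p q h
    have h1 := p.isLt; have h2 := q.isLt
    simp only [hordf] at h
    split_ifs at h <;> (apply Fin.ext; omega)
  have hDanti : ∀ p, StrictAnti (D p) := fun p a b hab =>
    sub_lt_sub_right (hdec p hab) _
  set mfun : ℕ → ℤ → ℕ :=
    fun t z => Nat.card {p : Fin l // blkf p = t ∧ z ∈ Set.range (D p)} with hmfun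
  set posf : Fin l → ℕ :=
    fun p => Nat.card {q : Fin l // blkf q = blkf p ∧ ordf q < ordf p} with hposf
  set Sset : Fin l → Set ℤ := fun p => {z | posf p < mfun (blkf p) z} with hSset
  -- upper bound
  set Mbig : ℤ := univ.sup' hne (fun q => C q 0) with hMbig
  have hub : ∀ p, ∀ z ∈ Sset p, z ≤ Mbig := by
    intro p z hz
    have hzS : posf p < mfun (blkf p) z := hz
    have hpos : 0 < mfun (blkf p) z := lt_of_le_of_lt (Nat.zero_le _) hzS
    have hnonempty : Nonempty {q : Fin l // blkf q = blkf p ∧ z ∈ Set.range (D q)} := by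
      by_contra hcon
      rw [not_nonempty_iff] at hcon
      haveI := hcon
      have h0' : mfun (blkf p) z = 0 := by
        simp only [hmfun]
        exact Nat.card_of_isEmpty
      omega
    obtain ⟨⟨q, -, i, hi⟩⟩ := hnonempty
    have h1 : C q i ≤ C q 0 := (hdec q).antitone (Nat.zero_le i)
    have h2 : (0:ℤ) ≤ sh q := by simp only [hsh]; split_ifs <;> norm_num
    have h3 : C q 0 ≤ Mbig := by
      rw [hMbig]; exact Finset.le_sup' (fun q => C q 0) (mem_univ q)
    simp only [hD] at hi
    omega
  -- lower bound
  set Bsmall : ℤ := univ.inf' hne (fun q => r q - (K q : ℤ) - 2) with hBsmall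
  have hrange : ∀ q : Fin l, ∀ z : ℤ, z ≤ r q - (K q : ℤ) - 2 → z ∈ Set.range (D q) := by
    intro q z hz
    by_cases h0 : psum c q = 0
    · refine ⟨(r q - z - 1).toNat, ?_⟩
      have hge : (r q - z - 1).toNat ≥ K q := by omega
      have hcast : ((r q - z - 1).toNat : ℤ) = r q - z - 1 := by omega
      have := hK q _ hge
      simp only [hD, hsh, h0, if_pos]
      rw [this, hcast]; ring
    · refine ⟨(r q - z).toNat, ?_⟩
      have hge : (r q - z).toNat ≥ K q := by omega
      have hcast : ((r q - z).toNat : ℤ) = r q - z := by omega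
      have := hK q _ hge
      simp only [hD, hsh, h0, if_neg, if_false]
      rw [this, hcast]; ring
  have hlow : ∀ p : Fin l, ∀ z : ℤ, z ≤ Bsmall → z ∈ Sset p := by
    intro p z hz
    have hall : ∀ q, z ∈ Set.range (D q) := fun q =>
      hrange q z (le_trans hz (Finset.inf'_le _ (mem_univ q)))
    show posf p < mfun (blkf p) z
    have heq : mfun (blkf p) z = Nat.card {q : Fin l // blkf q = blkf p} := by
      rw [hmfun]
      exact ncard_congr _ _ (fun q => by simp [hall q])
    rw [heq, hposf]
    exact pos_lt_block' blkf ordf p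
  -- enumerations
  have henum : ∀ p, ∃ e : ℕ → ℤ, StrictAnti e ∧ Set.range e = Sset p := fun p =>
    exists_enum _ ⟨Mbig, hub p⟩ ⟨Bsmall, fun z hz => hlow p z hz⟩
  choose e he1 he2 using henum
  set Ct : Fin l → ℕ → ℤ := fun p i => e p i + sh p with hCt
  have hCtanti : ∀ p, StrictAnti (Ct p) := fun p a b hab =>
    add_lt_add_of_lt_of_le (he1 p hab) le_rfl
  -- block facts
  have hmle : ∀ t z, mfun t z ≤ Nat.card {p : Fin l // blkf p = t} := by
    intro t z
    rw [hmfun]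
    exact ncard_mono _ _ (fun p hp => hp.1)
  have hrangeCt : ∀ p, psum c p ≠ 0 → Set.range (Ct p) = Sset p := by
    intro p hp
    have h : Ct p = e p := by
      funext i; simp only [hCt, hsh, if_neg hp, add_zero]
    rw [h, he2]
  have hrangeCt1 : ∀ p, psum c p = 0 → Set.range (fun i => Ct p i - 1) = Sset p := by
    intro p hp
    have h : (fun i => Ct p i - 1) = e p := by
      funext i; simp only [hCt, hsh, if_pos hp]; ring
    rw [h, he2]
  have hrangeD : ∀ p, psum c p ≠ 0 → Set.range (C p) = Set.range (D p) := by
    intro p hp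
    have h : D p = C p := by funext i; simp only [hD, hsh, if_neg hp, sub_zero]
    rw [h]
  have hrangeD1 : ∀ p, psum c p = 0 → Set.range (fun i => C p i - 1) = Set.range (D p) := by
    intro p hp
    have h : D p = (fun i => C p i - 1) := by funext i; simp only [hD, hsh, if_pos hp]
    rw [h]
  refine ⟨Ct, hCtanti, ?_, ?_, ?_⟩
  · -- multiset condition
    intro t _ z
    by_cases htd : t = 0 ∨ t = d
    · rw [multAt, multAt, if_pos htd, if_pos htd]
      have h1 := cnt_eq (fun p => psum c p = 0) (fun p i => Ct p i - 1)
        (fun p a b hab => sub_lt_sub_right (hCtanti p hab) 1) z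
      have h2 := cnt_eq (fun p => psum c p = d) Ct hCtanti z
      have h3 := cnt_eq (fun p => psum c p = 0) (fun p i => C p i - 1)
        (fun p a b hab => sub_lt_sub_right (hdec p hab) 1) z
      have h4 := cnt_eq (fun p => psum c p = d) C hdec z
      simp only [h1, h2, h3, h4]
      have e1 : Nat.card {p : Fin l // psum c p = 0 ∧ z ∈ Set.range (fun i => Ct p i - 1)}
          = Nat.card {p : Fin l // psum c p = 0 ∧ z ∈ Sset p} :=
        ncard_congr _ _ (fun p => by
          constructor
          · rintro ⟨h0, hz⟩; exact ⟨h0, (hrangeCt1 p h0) ▸ hz⟩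
          · rintro ⟨h0, hz⟩; exact ⟨h0, (hrangeCt1 p h0).symm ▸ hz⟩)
      have e2 : Nat.card {p : Fin l // psum c p = d ∧ z ∈ Set.range (Ct p)}
          = Nat.card {p : Fin l // psum c p = d ∧ z ∈ Sset p} :=
        ncard_congr _ _ (fun p => by
          constructor
          · rintro ⟨h0, hz⟩; exact ⟨h0, (hrangeCt p (by omega)) ▸ hz⟩
          · rintro ⟨h0, hz⟩; exact ⟨h0, (hrangeCt p (by omega)).symm ▸ hz⟩)
      have e3 : Nat.card {p : Fin l // psum c p = 0 ∧ z ∈ Set.range (fun i => C p i - 1)}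
          = Nat.card {p : Fin l // psum c p = 0 ∧ z ∈ Set.range (D p)} :=
        ncard_congr _ _ (fun p => by
          constructor
          · rintro ⟨h0, hz⟩; exact ⟨h0, (hrangeD1 p h0) ▸ hz⟩
          · rintro ⟨h0, hz⟩; exact ⟨h0, (hrangeD1 p h0).symm ▸ hz⟩)
      have e4 : Nat.card {p : Fin l // psum c p = d ∧ z ∈ Set.range (C p)}
          = Nat.card {p : Fin l // psum c p = d ∧ z ∈ Set.range (D p)} :=
        ncard_congr _ _ (fun p => by
          constructor
          · rintro ⟨h0, hz⟩; exact ⟨h0, (hrangeD p (by omega)) ▸ hz⟩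
          · rintro ⟨h0, hz⟩; exact ⟨h0, (hrangeD p (by omega)).symm ▸ hz⟩)
      rw [e1, e2, e3, e4]
      have hdisj : ∀ P : Fin l → Prop,
          ∀ p : Fin l, ¬ ((psum c p = 0 ∧ P p) ∧ (psum c p = d ∧ P p)) := by
        rintro P p ⟨⟨h0, -⟩, ⟨hdd, -⟩⟩; omega
      have hblkd : ∀ p, (psum c p = 0 ∨ psum c p = d) ↔ blkf p = d := by
        intro p; simp only [hblk]; split_ifs with h <;> simp [h]
      rw [ncard_union _ _ (hdisj (fun p => z ∈ Sset p)),
          ncard_union _ _ (hdisj (fun p => z ∈ Set.range (D p)))]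
      have eL : Nat.card {p : Fin l // (psum c p = 0 ∧ z ∈ Sset p) ∨ (psum c p = d ∧ z ∈ Sset p)}
          = Nat.card {p : Fin l // blkf p = d ∧ posf p < mfun d z} :=
        ncard_congr _ _ (fun p => by
          constructor
          · rintro (⟨h0, hz⟩ | ⟨h0, hz⟩) <;>
              (refine ⟨(hblkd p).1 (by omega), ?_⟩ ;
               have hb : blkf p = d := (hblkd p).1 (by omega) ;
               have hz' : posf p < mfun (blkf p) z := hz ;
               rw [← hb] ; exact hz')
          · rintro ⟨hb, hz⟩
            have h0 := (hblkd p).2 hb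
            have hz' : posf p < mfun (blkf p) z := hb ▸ hz
            rcases h0 with h0 | h0
            · exact Or.inl ⟨h0, hz'⟩
            · exact Or.inr ⟨h0, hz'⟩)
      have eR : Nat.card {p : Fin l // (psum c p = 0 ∧ z ∈ Set.range (D p))
              ∨ (psum c p = d ∧ z ∈ Set.range (D p))}
          = Nat.card {p : Fin l // blkf p = d ∧ z ∈ Set.range (D p)} :=
        ncard_congr _ _ (fun p => by
          rw [← hblkd p]; tauto)
      rw [eL, eR]
      have hR : Nat.card {p : Fin l // blkf p = d ∧ z ∈ Set.range (D p)} = mfun d z := rfl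
      rw [hR]
      simp only [hposf]
      exact block_count' blkf ordf hordinj d (mfun d z) (hmle d z)
    · rw [multAt, multAt, if_neg htd, if_neg htd]
      have h1 := cnt_eq (fun p => psum c p = t) Ct hCtanti z
      have h2 := cnt_eq (fun p => psum c p = t) C hdec z
      simp only [h1, h2]
      push_neg at htd
      have hblkt : ∀ p, psum c p = t ↔ blkf p = t := by
        intro p
        have ht1 := htd.1; have ht2 := htd.2
        simp only [hblk]; split_ifs with h <;> omega
      have e1 : Nat.card {p : Fin l // psum c p = t ∧ z ∈ Set.range (Ct p)}
          = Nat.card {p : Fin l // blkf p = t ∧ posf p < mfun t z} :=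
        ncard_congr _ _ (fun p => by
          constructor
          · rintro ⟨hpt, hz⟩
            have hz' : z ∈ Sset p := (hrangeCt p (by omega)) ▸ hz
            have hb : blkf p = t := (hblkt p).1 hpt
            refine ⟨hb, ?_⟩
            have hz'' : posf p < mfun (blkf p) z := hz'
            rw [← hb]; exact hz''
          · rintro ⟨hb, hz⟩
            have hpt : psum c p = t := (hblkt p).2 hb
            refine ⟨hpt, ?_⟩
            rw [hrangeCt p (by omega)]
            show posf p < mfun (blkf p) z
            rw [hb]; exact hz)
      have e2 : Nat.card {p : Fin l // psum c p = t ∧ z ∈ Set.range (C p)}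
          = Nat.card {p : Fin l // blkf p = t ∧ z ∈ Set.range (D p)} :=
        ncard_congr _ _ (fun p => by
          constructor
          · rintro ⟨hpt, hz⟩
            exact ⟨(hblkt p).1 hpt, (hrangeD p (by omega)) ▸ hz⟩
          · rintro ⟨hb, hz⟩
            have hpt : psum c p = t := (hblkt p).2 hb
            exact ⟨hpt, (hrangeD p (by omega)).symm ▸ hz⟩)
      rw [e1, e2]
      have hR : Nat.card {p : Fin l // blkf p = t ∧ z ∈ Set.range (D p)} = mfun t z := rfl
      rw [hR]
      simp only [hposf]
      exact block_count' blkf ordf hordinj t (mfun t z) (hmle t z)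
  · -- chain condition within blocks
    intro p hcp hp0 i
    set p' : Fin l := ⟨(p : ℕ) - 1, lt_of_le_of_lt (Nat.sub_le _ _) p.isLt⟩ with hp'
    have hps : psum c p = psum c p' := by
      have h1 : Finset.Iic p = insert p (Finset.Iic p') := by
        ext q
        simp only [Finset.mem_Iic, Finset.mem_insert, Fin.le_def, Fin.ext_iff, hp']
        omega
      rw [psum, psum, h1, Finset.sum_insert (by
        simp only [Finset.mem_Iic, Fin.le_def, hp']; omega), hcp, zero_add]
    have hv' : (p' : ℕ) = (p : ℕ) - 1 := rfl
    have hblk' : blkf p' = blkf p := by simp only [hblk, ← hps]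
    have hord' : ordf p' < ordf p := by
      simp only [hordf, ← hps, hv']
      split_ifs <;> omega
    have hposlt : posf p' < posf p := by
      simp only [hposf]
      exact pos_mono' blkf ordf hblk' hord'
    have hsub : Sset p ⊆ Sset p' := by
      intro z hz
      show posf p' < mfun (blkf p') z
      rw [hblk']
      exact lt_trans hposlt hz
    have hzS : e p i ∈ Sset p' := hsub (by rw [← he2 p]; exact ⟨i, rfl⟩)
    rw [← he2 p'] at hzS
    obtain ⟨i', hi'⟩ := hzS
    refine ⟨i', ?_⟩
    have hshp : sh p' = sh p := by simp only [hsh, ← hps]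
    simp only [hCt]
    rw [hshp, hi']
  · -- cyclic condition
    intro h0 hc0 i
    set p0 : Fin l := ⟨0, h0⟩ with hp0
    set pl : Fin l := ⟨l - 1, Nat.sub_lt h0 Nat.one_pos⟩ with hpl
    have hps0 : psum c p0 = 0 := by
      have h1 : Finset.Iic p0 = {p0} := by
        ext q
        simp only [Finset.mem_Iic, Finset.mem_singleton, Fin.le_def, Fin.ext_iff, hp0]
        omega
      rw [psum, h1, Finset.sum_singleton, hc0]
    have hpsl : psum c pl = d := by
      have h1 : Finset.Iic pl = univ := by
        ext q
        have := q.isLt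
        simp only [Finset.mem_Iic, Finset.mem_univ, Fin.le_def, hpl, iff_true]
        omega
      rw [psum, h1, hc]
    have hblkeq : blkf pl = blkf p0 := by
      show (if psum c pl = 0 then d else psum c pl) = (if psum c p0 = 0 then d else psum c p0)
      rw [if_neg (by omega : ¬ psum c pl = 0), if_pos hps0, hpsl]
    have hordlt : ordf pl < ordf p0 := by
      show (if psum c pl = 0 then l + (pl : ℕ) else (pl : ℕ))
          < (if psum c p0 = 0 then l + (p0 : ℕ) else (p0 : ℕ))
      rw [if_neg (by omega : ¬ psum c pl = 0), if_pos hps0]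
      show l - 1 < l + 0
      omega
    have hposlt : posf pl < posf p0 := by
      simp only [hposf]
      exact pos_mono' blkf ordf hblkeq hordlt
    have hsub : Sset p0 ⊆ Sset pl := by
      intro z hz
      show posf pl < mfun (blkf pl) z
      rw [hblkeq]
      exact lt_trans hposlt hz
    have hzS : e p0 i ∈ Sset pl := hsub (by rw [← he2 p0]; exact ⟨i, rfl⟩)
    rw [← he2 pl] at hzS
    obtain ⟨i', hi'⟩ := hzS
    refine ⟨i', ?_⟩
    show e pl i' + (if psum c pl = 0 then 1 else 0)
        = (e p0 i + (if psum c p0 = 0 then 1 else 0)) - 1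
    rw [if_neg (by omega : ¬ psum c pl = 0), if_pos hps0, hi']
    ring
end
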